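/- arXiv:1712.07845 — 4 statements merged into one kernel-verified Lean document; each statement's English description precedes it below -/
import Mathlib

section
/- Let K be a 1-skeletal simplicial set. Then the homotopy category hK is isomorphic to the path category (free category) Paths Q(K) on the quiver Q(K) of nondegenerate edges of K, via the functor that is the identity on objects (the 0-simplices of K) and sends each generating arrow of Q(K), i.e. each nondegenerate 1-simplex of K, to its class in hK. In particular, morphisms X → Y in hK correspond bijectively to finite sequences of adjacent nondegenerate edges of K from X to Y. -/
open CategoryTheory Simplicial Opposite

universe u

/-- A simplicial set is 1-skeletal if every simplex of dimension ≥ 2 is degenerate. -/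
def SSet.OneSkeletal (K : SSet.{u}) : Prop :=
  ∀ (n : ℕ) (x : K _⦋n+2⦌), ∃ (i : Fin (n+2)) (y : K _⦋n+1⦌), K.σ i y = x

namespace SSetPaper

/-- The quiver whose vertices are the `0`-simplices of `K` and whose arrows `x ⟶ y`
are the nondegenerate `1`-simplices `e` of `K` with `d₁ e = x` and `d₀ e = y`. -/
def EdgeQuiver (K : SSet.{u}) : Type u := K _⦋0⦌

instance (K : SSet.{u}) : Quiver (EdgeQuiver K) where
  Hom x y := { e : K _⦋1⦌ // (∀ z : K _⦋0⦌, K.σ 0 z ≠ e) ∧ K.δ 1 e = x ∧ K.δ 0 e = y }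

end SSetPaper

open SSet SimplexCategory

namespace SSetPaper

-- tiny SimplexCategory lemmas
lemma hom1_ext {n : ℕ} {f g : (⦋1⦌ : SimplexCategory) ⟶ ⦋n⦌}
    (h0 : f.toOrderHom 0 = g.toOrderHom 0) (h1 : f.toOrderHom 1 = g.toOrderHom 1) : f = g := by
  ext i
  fin_cases i
  · exact congrArg Fin.val h0
  · exact congrArg Fin.val h1

lemma diag_two_eq_δ_one : diag 2 = SimplexCategory.δ (1 : Fin 3) := by
  apply hom1_ext <;> rfl

lemma mkOfSucc_zero_eq : mkOfSucc (0 : Fin 1) = 𝟙 (⦋1⦌ : SimplexCategory) := by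
  apply hom1_ext <;> rfl

lemma const_zero_zero : SimplexCategory.const ⦋0⦌ ⦋0⦌ 0 = 𝟙 (⦋0⦌ : SimplexCategory) := by
  apply SimplexCategory.hom_zero_zero

lemma intervalEdge_zero {n : ℕ} (j : ℕ) (hj : j + 0 ≤ n) :
    intervalEdge j 0 hj =
      SimplexCategory.σ (0 : Fin 1) ≫ SimplexCategory.const ⦋0⦌ ⦋n⦌ ⟨j, by rw [len_mk]; omega⟩ := by
  apply hom1_ext
  · rfl
  · apply Fin.ext; show j + 0 = j; omega

lemma intervalEdge_one {n : ℕ} (j : ℕ) (hj : j + 1 ≤ n) :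
    intervalEdge j 1 hj = mkOfSucc ⟨j, by omega⟩ := by
  apply hom1_ext
  · rfl
  · rfl

lemma eq_intervalEdge {n : ℕ} (g : (⦋1⦌ : SimplexCategory) ⟶ ⦋n⦌) :
    g = intervalEdge (g.toOrderHom 0) ((g.toOrderHom 1 : ℕ) - g.toOrderHom 0)
      (by
        have h01 : (g.toOrderHom 0 : ℕ) ≤ g.toOrderHom 1 := g.toOrderHom.monotone (by decide)
        have := (g.toOrderHom 1).isLt
        simp only [len_mk] at this ⊢
        omega) := by
  have h01 : (g.toOrderHom 0 : ℕ) ≤ g.toOrderHom 1 := g.toOrderHom.monotone (by decide)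
  apply hom1_ext
  · apply Fin.ext; rfl
  · apply Fin.ext; show (g.toOrderHom 1 : ℕ) = g.toOrderHom 0 + ((g.toOrderHom 1 : ℕ) - g.toOrderHom 0); omega

end SSetPaper

namespace SSetPaper

lemma comp_mkOfLeComp_zero {n : ℕ} (i j k : Fin (n+1)) (h₁ : i ≤ j) (h₂ : j ≤ k) :
    mkOfSucc (0 : Fin 2) ≫ mkOfLeComp i j k h₁ h₂ = mkOfLe i j h₁ := by
  apply hom1_ext <;> rfl

lemma comp_mkOfLeComp_one {n : ℕ} (i j k : Fin (n+1)) (h₁ : i ≤ j) (h₂ : j ≤ k) :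
    mkOfSucc (1 : Fin 2) ≫ mkOfLeComp i j k h₁ h₂ = mkOfLe j k h₂ := by
  apply hom1_ext <;> rfl

lemma diag_comp_mkOfLeComp {n : ℕ} (i j k : Fin (n+1)) (h₁ : i ≤ j) (h₂ : j ≤ k) :
    diag 2 ≫ mkOfLeComp i j k h₁ h₂ = mkOfLe i k (h₁.trans h₂) := by
  apply hom1_ext <;> rfl

lemma intervalEdge_eq_mkOfLe {n : ℕ} (j l : ℕ) (hjl : j + l ≤ n) :
    intervalEdge j l hjl = mkOfLe ⟨j, by omega⟩ ⟨j + l, by omega⟩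
      (by simp [Fin.mk_le_mk]) := rfl

lemma mkOfLe_succ {n : ℕ} (j : ℕ) (hj : j + 1 ≤ n) :
    mkOfLe (n := n) ⟨j, by omega⟩ ⟨j + 1, by omega⟩ (by simp [Fin.mk_le_mk]) =
      mkOfSucc ⟨j, by omega⟩ := by
  apply hom1_ext <;> rfl

lemma succ_zero_σ_zero : mkOfSucc (0 : Fin 2) ≫ SimplexCategory.σ (0 : Fin 2) =
    SimplexCategory.σ (0 : Fin 1) ≫ SimplexCategory.δ (1 : Fin 2) := by
  apply hom1_ext <;> decide

lemma succ_one_σ_zero : mkOfSucc (1 : Fin 2) ≫ SimplexCategory.σ (0 : Fin 2) = 𝟙 _ := by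
  apply hom1_ext <;> decide

lemma succ_zero_σ_one : mkOfSucc (0 : Fin 2) ≫ SimplexCategory.σ (1 : Fin 2) = 𝟙 _ := by
  apply hom1_ext <;> decide

lemma succ_one_σ_one : mkOfSucc (1 : Fin 2) ≫ SimplexCategory.σ (1 : Fin 2) =
    SimplexCategory.σ (0 : Fin 1) ≫ SimplexCategory.δ (0 : Fin 2) := by
  apply hom1_ext <;> decide

lemma diag_σ (i : Fin 2) : diag 2 ≫ SimplexCategory.σ i = 𝟙 _ := by
  fin_cases i <;> (apply hom1_ext <;> decide)

lemma δ_one_σ (i : Fin 2) : SimplexCategory.δ (1 : Fin 3) ≫ SimplexCategory.σ i = 𝟙 _ := by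
  fin_cases i <;> (apply hom1_ext <;> decide)

lemma δ_one_σ_zero' : SimplexCategory.δ (1 : Fin 2) ≫ SimplexCategory.σ (0 : Fin 1) = 𝟙 _ := by
  apply SimplexCategory.hom_zero_zero

-- StrictSegal generalities
open SSet.StrictSegal in
lemma spineToSimplex_zero {X : SSet.{u}} (sx : StrictSegal X) (p : Path X 0) :
    sx.spineToSimplex p = p.vertex 0 := by
  have := spineToSimplex_vertex sx 0 p
  rwa [const_zero_zero, op_id, FunctorToTypes.map_id_apply] at this

open SSet.StrictSegal in
lemma spineToSimplex_one {X : SSet.{u}} (sx : StrictSegal X) (p : Path X 1) :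
    sx.spineToSimplex p = p.arrow 0 := by
  have := spineToSimplex_arrow sx 0 p
  rwa [mkOfSucc_zero_eq, op_id, FunctorToTypes.map_id_apply] at this

open SSet.StrictSegal in
lemma spineToDiagonal_spine {X : SSet.{u}} (sx : StrictSegal X) {n : ℕ} (T : X _⦋n⦌) :
    sx.spineToDiagonal (X.spine n T) = X.map (diag n).op T := by
  unfold SSet.StrictSegal.spineToDiagonal SimplicialObject.diagonal
  rw [spineToSimplex_spine_apply]

end SSetPaper

namespace SSetPaper

open SSet.StrictSegal in
lemma spineToDiagonal_zero {X : SSet.{u}} (sx : StrictSegal X) (p : Path X 0) :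
    sx.spineToDiagonal p = X.σ 0 (p.vertex 0) := by
  unfold SSet.StrictSegal.spineToDiagonal SimplicialObject.diagonal
  rw [spineToSimplex_zero]
  have : diag 0 = SimplexCategory.σ (0 : Fin 1) := by apply hom1_ext <;> rfl
  rw [this]; rfl

open SSet.StrictSegal in
lemma spineToDiagonal_one {X : SSet.{u}} (sx : StrictSegal X) (p : Path X 1) :
    sx.spineToDiagonal p = p.arrow 0 := by
  unfold SSet.StrictSegal.spineToDiagonal SimplicialObject.diagonal
  rw [spineToSimplex_one]
  have : diag 1 = 𝟙 _ := by apply hom1_ext <;> rfl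
  rw [this, op_id, FunctorToTypes.map_id_apply]

end SSetPaper


namespace SSetPaper

variable (K : SSet.{u})

/-- generator arrow -/
def gen (e : K _⦋1⦌) (h : ∀ z : K _⦋0⦌, K.σ 0 z ≠ e) :
    Quiver.Hom (V := EdgeQuiver K) (K.δ 1 e) (K.δ 0 e) := ⟨e, h, rfl, rfl⟩

def Vmap (x : K _⦋0⦌) : nerve (Paths (EdgeQuiver K)) _⦋0⦌ :=
  ComposableArrows.mk₀ ((Paths.of (EdgeQuiver K)).obj (show EdgeQuiver K from x))

open Classical in
noncomputable def theta (e : K _⦋1⦌) : nerve (Paths (EdgeQuiver K)) _⦋1⦌ :=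
  if h : ∀ z, K.σ 0 z ≠ e then ComposableArrows.mk₁ ((Paths.of (EdgeQuiver K)).map (gen K e h))
  else (nerve (Paths (EdgeQuiver K))).σ 0 (Vmap K (K.δ 1 e))

variable {K}

lemma δ_one_σ_zero_apply (z : K _⦋0⦌) : K.δ 1 (K.σ 0 z) = z := by
  show K.map _ (K.map _ z) = z
  rw [← FunctorToTypes.map_comp_apply, ← op_comp, δ_one_σ_zero', op_id,
    FunctorToTypes.map_id_apply]

lemma δ_zero_σ_zero_apply (z : K _⦋0⦌) : K.δ 0 (K.σ 0 z) = z := by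
  show K.map _ (K.map _ z) = z
  have : SimplexCategory.δ (0 : Fin 2) ≫ SimplexCategory.σ (0 : Fin 1) = 𝟙 _ :=
    SimplexCategory.hom_zero_zero _
  rw [← FunctorToTypes.map_comp_apply, ← op_comp, this, op_id, FunctorToTypes.map_id_apply]

lemma theta_σ (z : K _⦋0⦌) :
    theta K (K.σ 0 z) = (nerve (Paths (EdgeQuiver K))).σ 0 (Vmap K z) := by
  have hn : ¬ ∀ z' : K _⦋0⦌, K.σ 0 z' ≠ K.σ 0 z := by push_neg; exact ⟨z, rfl⟩
  simp only [theta, hn, ↓reduceDIte, δ_one_σ_zero_apply]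

lemma theta_src (e : K _⦋1⦌) :
    (nerve (Paths (EdgeQuiver K))).δ 1 (theta K e) = Vmap K (K.δ 1 e) := by
  by_cases hh : ∀ z : K _⦋0⦌, K.σ 0 z ≠ e
  · simp only [theta, eq_true hh, ↓reduceDIte]
    apply ComposableArrows.ext₀
    rfl
  · simp only [theta, hh, ↓reduceDIte]
    simp only [δ_one_σ_zero_apply]

lemma theta_tgt (e : K _⦋1⦌) :
    (nerve (Paths (EdgeQuiver K))).δ 0 (theta K e) = Vmap K (K.δ 0 e) := by
  by_cases hh : ∀ z : K _⦋0⦌, K.σ 0 z ≠ e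
  · simp only [theta, eq_true hh, ↓reduceDIte]
    apply ComposableArrows.ext₀
    rfl
  · simp only [theta, hh, ↓reduceDIte]
    push_neg at hh
    obtain ⟨z, hz⟩ := hh
    simp only [δ_zero_σ_zero_apply, ← hz, δ_one_σ_zero_apply]

variable (K) in
/-- mapping a path in `K` to a path in the nerve -/
noncomputable def thetaPath {n : ℕ} (p : Path K n) : Path (nerve (Paths (EdgeQuiver K))) n where
  vertex i := Vmap K (p.vertex i)
  arrow i := theta K (p.arrow i)
  arrow_src i := (theta_src (p.arrow i)).trans (congrArg (Vmap K) (p.arrow_src i))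
  arrow_tgt i := (theta_tgt (p.arrow i)).trans (congrArg (Vmap K) (p.arrow_tgt i))

end SSetPaper

namespace SSetPaper

variable {K : SSet.{u}}

lemma thetaPath_spine_σ (i : Fin 2) (y : K _⦋1⦌) :
    thetaPath K (K.spine 2 (K.σ i y)) =
      (nerve (Paths (EdgeQuiver K))).spine 2
        ((nerve (Paths (EdgeQuiver K))).σ i (theta K y)) := by
  apply Path.ext'
  intro j
  show theta K (K.map (mkOfSucc j).op (K.map (SimplexCategory.σ i).op y)) =
    (nerve (Paths (EdgeQuiver K))).map (mkOfSucc j).op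
      ((nerve (Paths (EdgeQuiver K))).map (SimplexCategory.σ i).op (theta K y))
  rw [← FunctorToTypes.map_comp_apply, ← op_comp, ← FunctorToTypes.map_comp_apply, ← op_comp]
  fin_cases i <;> fin_cases j
  · rw [show (mkOfSucc (⟨0, by omega⟩ : Fin 2) ≫ SimplexCategory.σ (⟨0, by omega⟩ : Fin 2)) =
      SimplexCategory.σ (0 : Fin 1) ≫ SimplexCategory.δ (1 : Fin 2) from succ_zero_σ_zero]
    simp only [op_comp, FunctorToTypes.map_comp_apply]
    show theta K (K.σ 0 (K.δ 1 y)) = (nerve _).σ 0 ((nerve _).δ 1 (theta K y))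
    rw [theta_σ, theta_src]
  · rw [show (mkOfSucc (⟨1, by omega⟩ : Fin 2) ≫ SimplexCategory.σ (⟨0, by omega⟩ : Fin 2)) =
      𝟙 _ from succ_one_σ_zero]
    rw [op_id, FunctorToTypes.map_id_apply, FunctorToTypes.map_id_apply]
  · rw [show (mkOfSucc (⟨0, by omega⟩ : Fin 2) ≫ SimplexCategory.σ (⟨1, by omega⟩ : Fin 2)) =
      𝟙 _ from succ_zero_σ_one]
    rw [op_id, FunctorToTypes.map_id_apply, FunctorToTypes.map_id_apply]
  · rw [show (mkOfSucc (⟨1, by omega⟩ : Fin 2) ≫ SimplexCategory.σ (⟨1, by omega⟩ : Fin 2)) =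
      SimplexCategory.σ (0 : Fin 1) ≫ SimplexCategory.δ (0 : Fin 2) from succ_one_σ_one]
    simp only [op_comp, FunctorToTypes.map_comp_apply]
    show theta K (K.σ 0 (K.δ 0 y)) = (nerve _).σ 0 ((nerve _).δ 0 (theta K y))
    rw [theta_σ, theta_tgt]

open SSet.StrictSegal in
lemma theta_comp (hK : K.OneSkeletal) (s : K _⦋2⦌) :
    theta K (K.δ 1 s) = (Nerve.strictSegal _).spineToDiagonal (thetaPath K (K.spine 2 s)) := by
  obtain ⟨i, y, rfl⟩ := hK 0 s
  have hL : K.δ 1 (K.σ i y) = y := by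
    show K.map _ (K.map _ y) = y
    rw [← FunctorToTypes.map_comp_apply, ← op_comp, δ_one_σ i, op_id,
      FunctorToTypes.map_id_apply]
  rw [hL, thetaPath_spine_σ, spineToDiagonal_spine]
  rw [show SimplicialObject.σ (nerve (Paths (EdgeQuiver K))) i (theta K y) =
    (nerve (Paths (EdgeQuiver K))).map (SimplexCategory.σ i).op (theta K y) from rfl,
    ← FunctorToTypes.map_comp_apply, ← op_comp, diag_σ i, op_id, FunctorToTypes.map_id_apply]

end SSetPaper

namespace SSetPaper

variable {K : SSet.{u}}

open SSet.StrictSegal in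
lemma theta_intervalEdge (hK : K.OneSkeletal) {n : ℕ} (x : K _⦋n⦌) (j l : ℕ)
    (hjl : j + l ≤ n) :
    theta K (K.map (intervalEdge j l hjl).op x) =
      (nerve (Paths (EdgeQuiver K))).map (intervalEdge j l hjl).op
        ((Nerve.strictSegal _).spineToSimplex (thetaPath K (K.spine n x))) := by
  revert hjl
  induction l with
  | zero =>
    intro hjl
    rw [spineToSimplex_edge, spineToDiagonal_zero]
    have hfac : K.map (intervalEdge j 0 hjl).op x
        = K.σ 0 (K.map (SimplexCategory.const ⦋0⦌ ⦋n⦌ ⟨j, by rw [len_mk]; omega⟩).op x) := by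
      show _ = K.map _ (K.map _ x)
      rw [← FunctorToTypes.map_comp_apply, ← op_comp, ← intervalEdge_zero]
    rw [hfac, theta_σ]
    rfl
  | succ l ih =>
    intro hjl
    have hjl' : j + l ≤ n := by omega
    set p := thetaPath K (K.spine n x) with hp
    set S := (Nerve.strictSegal _).spineToSimplex p with hS
    let a : Fin (n+1) := ⟨j, by omega⟩
    let b : Fin (n+1) := ⟨j+l, by omega⟩
    let c : Fin (n+1) := ⟨j+l+1, by omega⟩
    have hab : a ≤ b := by simp [a, b, Fin.mk_le_mk]
    have hbc : b ≤ c := by simp [b, c, Fin.mk_le_mk]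
    set tri : (⦋2⦌ : SimplexCategory) ⟶ ⦋n⦌ := mkOfLeComp a b c hab hbc with htri
    have hA : thetaPath K (K.spine 2 (K.map tri.op x)) =
        (nerve (Paths (EdgeQuiver K))).spine 2
          ((nerve (Paths (EdgeQuiver K))).map tri.op S) := by
      apply Path.ext'
      intro jj
      show theta K (K.map (mkOfSucc jj).op (K.map tri.op x)) =
        (nerve (Paths (EdgeQuiver K))).map (mkOfSucc jj).op
          ((nerve (Paths (EdgeQuiver K))).map tri.op S)
      rw [← FunctorToTypes.map_comp_apply, ← op_comp, ← FunctorToTypes.map_comp_apply,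
        ← op_comp]
      fin_cases jj
      · rw [show mkOfSucc (⟨0, by omega⟩ : Fin 2) ≫ tri = mkOfLe a b hab from
          comp_mkOfLeComp_zero a b c hab hbc]
        rw [show mkOfLe a b hab = intervalEdge j l hjl' from rfl]
        exact ih hjl'
      · rw [show mkOfSucc (⟨1, by omega⟩ : Fin 2) ≫ tri = mkOfLe b c hbc from
          comp_mkOfLeComp_one a b c hab hbc]
        rw [show mkOfLe b c hbc = mkOfSucc ⟨j + l, by omega⟩ from
          mkOfLe_succ (j + l) (by omega)]
        rw [hS, hp, spineToSimplex_arrow]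
        rfl
    have hs : K.map (intervalEdge j (l+1) hjl).op x = K.δ 1 (K.map tri.op x) := by
      show _ = K.map _ (K.map _ x)
      rw [← FunctorToTypes.map_comp_apply, ← op_comp,
        show (SimplexCategory.δ (1 : Fin 3)) = diag 2 from diag_two_eq_δ_one.symm,
        diag_comp_mkOfLeComp]
      rfl
    rw [hs, theta_comp hK, hA, spineToDiagonal_spine]
    show (nerve _).map _ ((nerve _).map _ S) = _
    rw [← FunctorToTypes.map_comp_apply, ← op_comp, diag_comp_mkOfLeComp]
    rfl

end SSetPaper

namespace SSetPaper

variable {K : SSet.{u}}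

open SSet.StrictSegal in
lemma theta_map_edge (hK : K.OneSkeletal) {n : ℕ} (g : (⦋1⦌ : SimplexCategory) ⟶ ⦋n⦌)
    (x : K _⦋n⦌) :
    theta K (K.map g.op x) =
      (nerve (Paths (EdgeQuiver K))).map g.op
        ((Nerve.strictSegal _).spineToSimplex (thetaPath K (K.spine n x))) := by
  rw [eq_intervalEdge g]
  exact theta_intervalEdge hK x _ _ _

open SSet.StrictSegal in
noncomputable def phi (K : SSet.{u}) (hK : K.OneSkeletal) :
    K ⟶ nerve (Paths (EdgeQuiver K)) where
  app m := TypeCat.ofHom fun x => (Nerve.strictSegal _).spineToSimplex (thetaPath K (K.spine m.unop.len x))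
  naturality m m' f := by
    ext x
    show (Nerve.strictSegal _).spineToSimplex (thetaPath K (K.spine (unop m').len (K.map f x))) =
      (nerve (Paths (EdgeQuiver K))).map f ((Nerve.strictSegal _).spineToSimplex (thetaPath K (K.spine (unop m).len x)))
    apply (Nerve.strictSegal _).spineInjective (n := (unop m').len)
    show SSet.spine _ _ _ = SSet.spine _ _ _
    rw [spine_spineToSimplex_apply]
    ext i
    · show Vmap K (K.map (SimplexCategory.const ⦋0⦌ _ i).op (K.map f x)) =
        (nerve _).map (SimplexCategory.const ⦋0⦌ _ i).op ((nerve _).map f _)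
      rw [← FunctorToTypes.map_comp_apply, ← FunctorToTypes.map_comp_apply,
        show f ≫ (SimplexCategory.const ⦋0⦌ _ i).op =
          ((SimplexCategory.const ⦋0⦌ _ i) ≫ f.unop).op from rfl,
        SimplexCategory.const_comp]
      exact (spineToSimplex_vertex (Nerve.strictSegal _)
        ((Hom.toOrderHom f.unop) i) (thetaPath K (K.spine (unop m).len x))).symm
    · show theta K (K.map (mkOfSucc i).op (K.map f x)) =
        (nerve _).map (mkOfSucc i).op ((nerve _).map f _)
      rw [← FunctorToTypes.map_comp_apply, ← FunctorToTypes.map_comp_apply,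
        show f ≫ (mkOfSucc i).op = ((mkOfSucc i) ≫ f.unop).op from rfl]
      exact theta_map_edge (n := (unop m).len) hK _ x

open SSet.StrictSegal in
lemma phi_app_zero (hK : K.OneSkeletal) (v : K _⦋0⦌) :
    (phi K hK).app (op ⦋0⦌) v = Vmap K v := by
  show (Nerve.strictSegal _).spineToSimplex (thetaPath K (K.spine 0 v)) = _
  rw [spineToSimplex_zero]
  show Vmap K (K.map (SimplexCategory.const ⦋0⦌ ⦋0⦌ 0).op v) = Vmap K v
  rw [const_zero_zero, op_id, FunctorToTypes.map_id_apply]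

open SSet.StrictSegal in
lemma phi_app_one (hK : K.OneSkeletal) (e : K _⦋1⦌) :
    (phi K hK).app (op ⦋1⦌) e = theta K e := by
  show (Nerve.strictSegal _).spineToSimplex (thetaPath K (K.spine 1 e)) = _
  rw [spineToSimplex_one]
  show theta K (K.map (mkOfSucc 0).op e) = _
  rw [mkOfSucc_zero_eq, op_id, FunctorToTypes.map_id_apply]

lemma spine_map_apply {X Y : SSet.{u}} (ψ : X ⟶ Y) {m : SimplexCategoryᵒᵖ} (x : X.obj m) :
    Y.spine m.unop.len (ψ.app m x) = (X.spine m.unop.len x).map ψ := by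
  ext i
  · exact (NatTrans.naturality_apply ψ _ x).symm
  · exact (NatTrans.naturality_apply ψ _ x).symm

open SSet.StrictSegal in
lemma hom_ext_into_nerve {D : Type u} [Category.{u} D] {ψ₁ ψ₂ : K ⟶ nerve D}
    (h0 : ∀ v : K _⦋0⦌, ψ₁.app (op ⦋0⦌) v = ψ₂.app (op ⦋0⦌) v)
    (h1 : ∀ e : K _⦋1⦌, ψ₁.app (op ⦋1⦌) e = ψ₂.app (op ⦋1⦌) e) : ψ₁ = ψ₂ := by
  apply NatTrans.ext
  funext m
  refine ConcreteCategory.hom_ext _ _ fun x => ?_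
  apply (Nerve.strictSegal _).spineInjective (n := m.unop.len)
  show SSet.spine _ _ _ = SSet.spine _ _ _
  rw [spine_map_apply ψ₁ x, spine_map_apply ψ₂ x]
  ext i
  · exact h0 _
  · exact h1 _

end SSetPaper

namespace SSetPaper

section Assembly

variable (h : SSet.{u} ⥤ Cat.{u, u}) (adj : h ⊣ nerveFunctor.{u, u}) (K : SSet.{u})

lemma unit_app_src (e : K _⦋1⦌) :
    ((adj.unit.app K).app (op ⦋0⦌) (K.δ 1 e)).obj 0 =
      ((adj.unit.app K).app (op ⦋1⦌) e).obj 0 := by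
  have hnat := NatTrans.naturality_apply (adj.unit.app K) (SimplexCategory.δ (1 : Fin 2)).op e
  exact congrArg (fun F => F.obj 0) hnat

lemma unit_app_tgt (e : K _⦋1⦌) :
    ((adj.unit.app K).app (op ⦋0⦌) (K.δ 0 e)).obj 0 =
      ((adj.unit.app K).app (op ⦋1⦌) e).obj 1 := by
  have hnat := NatTrans.naturality_apply (adj.unit.app K) (SimplexCategory.δ (0 : Fin 2)).op e
  exact congrArg (fun F => F.obj 0) hnat

/-- the prefunctor underlying `F` -/
def Fpre : (EdgeQuiver K) ⥤q (h.obj K) where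
  obj x := ((adj.unit.app K).app (op ⦋0⦌) x).obj 0
  map {x y} e :=
    eqToHom ((congrArg (fun t => ((adj.unit.app K).app (op ⦋0⦌) t).obj 0)
        e.2.2.1).symm.trans (unit_app_src h adj K e.1)) ≫
      ((adj.unit.app K).app (op ⦋1⦌) e.1).map' 0 1 ≫
      eqToHom ((unit_app_tgt h adj K e.1).symm.trans
        (congrArg (fun t => ((adj.unit.app K).app (op ⦋0⦌) t).obj 0) e.2.2.2))

noncomputable def Ffun : Paths (EdgeQuiver K) ⥤ ↑(h.obj K) := Paths.lift (Fpre h adj K)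

end Assembly

end SSetPaper

namespace SSetPaper

section Assembly2

variable (h : SSet.{u} ⥤ Cat.{u, u}) (adj : h ⊣ nerveFunctor.{u, u}) (K : SSet.{u})
  (hK : K.OneSkeletal)

noncomputable def Gfun : (h.obj K) ⟶ Cat.of (Paths (EdgeQuiver K)) :=
  (adj.homEquiv K (Cat.of (Paths (EdgeQuiver K)))).symm (phi K hK)

lemma unit_comp_G :
    adj.unit.app K ≫ nerveFunctor.map (Gfun h adj K hK) = phi K hK := by
  have := (adj.homEquiv K (Cat.of (Paths (EdgeQuiver K)))).apply_symm_apply (phi K hK)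
  rw [Adjunction.homEquiv_unit] at this
  exact this

lemma G_unit_zero (v : K _⦋0⦌) :
    (nerveFunctor.map (Gfun h adj K hK)).app (op ⦋0⦌) ((adj.unit.app K).app (op ⦋0⦌) v) =
      Vmap K v := by
  have := ConcreteCategory.congr_hom (congr_app (unit_comp_G h adj K hK) (op ⦋0⦌)) v
  rw [NatTrans.comp_app] at this
  rw [types_comp_apply] at this
  rw [this]; exact phi_app_zero hK v

lemma G_unit_one (e : K _⦋1⦌) :
    (nerveFunctor.map (Gfun h adj K hK)).app (op ⦋1⦌) ((adj.unit.app K).app (op ⦋1⦌) e) =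
      theta K e := by
  have := ConcreteCategory.congr_hom (congr_app (unit_comp_G h adj K hK) (op ⦋1⦌)) e
  rw [NatTrans.comp_app, types_comp_apply] at this
  rw [this]; exact phi_app_one hK e

end Assembly2

end SSetPaper

namespace SSetPaper

/-- For a 1-skeletal simplicial set `K`, the homotopy category `hK` is
isomorphic to the path category on the quiver of nondegenerate edges of `K`, via the
functor which is the identity on objects (i.e. sends a `0`-simplex `x` to the object of
`hK` it determines under the unit `K ⟶ N(hK)`) and sends each nondegenerate `1`-simplex
to its class in `hK` (i.e. to the morphism determined by its image under the unit). -/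
theorem homotopyCategory_iso_paths_of_oneSkeletal
    (h : SSet.{u} ⥤ Cat.{u, u}) (adj : h ⊣ nerveFunctor.{u, u})
    (K : SSet.{u}) (hK : K.OneSkeletal) :
    ∃ F : Paths (EdgeQuiver K) ⥤ h.obj K,
      (∀ x : EdgeQuiver K,
        ComposableArrows.mk₀ (F.obj ((Paths.of (EdgeQuiver K)).obj x)) = (adj.unit.app K).app (op ⦋0⦌) x) ∧
      (∀ (x y : EdgeQuiver K) (e : x ⟶ y),
        ComposableArrows.mk₁ (F.map ((Paths.of (EdgeQuiver K)).map e)) = (adj.unit.app K).app (op ⦋1⦌) e.1) ∧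
      IsIso (X := Cat.of (Paths (EdgeQuiver K))) (Y := h.obj K) F.toCatHom := by
  refine ⟨Ffun h adj K, ?_, ?_, ?_⟩
  · intro x
    exact ComposableArrows.ext₀
      (F := ComposableArrows.mk₀ ((Ffun h adj K).obj ((Paths.of (EdgeQuiver K)).obj x)))
      (G := (adj.unit.app K).app (op ⦋0⦌) x) rfl
  · rintro x y ⟨e1, hnd, rfl, rfl⟩
    refine ComposableArrows.ext₁ (unit_app_src h adj K e1) (unit_app_tgt h adj K e1) ?_
    show (Ffun h adj K).map ((Paths.of (EdgeQuiver K)).map ⟨e1, hnd, rfl, rfl⟩) = _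
    rw [show (Ffun h adj K).map ((Paths.of (EdgeQuiver K)).map ⟨e1, hnd, rfl, rfl⟩) =
      (Fpre h adj K).map ⟨e1, hnd, rfl, rfl⟩ from Paths.lift_toPath _ _]
    rfl
  · constructor
    refine ⟨Gfun h adj K hK, ?_, ?_⟩
    · -- F ≫ G = 𝟙
      apply Cat.Hom.ext
      show Ffun h adj K ⋙ (Gfun h adj K hK).toFunctor = 𝟭 _
      fapply Paths.ext_functor
      · funext x
        exact Functor.congr_obj (G_unit_zero h adj K hK x) 0
      · rintro a b ⟨e1, hnd, rfl, rfl⟩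
        have h1 := G_unit_one h adj K hK e1
        simp only [theta, eq_true hnd, ↓reduceDIte] at h1
        have p := Functor.congr_obj h1 0
        have q := Functor.congr_obj h1 1
        have h2' : (Gfun h adj K hK).toFunctor.map (((adj.unit.app K).app (op ⦋1⦌) e1).map' 0 1) =
            eqToHom p ≫ Quiver.Hom.toPath (gen K e1 hnd) ≫ eqToHom q.symm :=
          Functor.congr_hom h1 (homOfLE (by decide))
        show (Gfun h adj K hK).toFunctor.map ((Ffun h adj K).map (Quiver.Hom.toPath (gen K e1 hnd))) =
          eqToHom _ ≫ (𝟭 (Paths (EdgeQuiver K))).map (Quiver.Hom.toPath (gen K e1 hnd)) ≫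
            eqToHom _
        rw [show (Ffun h adj K).map (Quiver.Hom.toPath (gen K e1 hnd)) =
          (Fpre h adj K).map (gen K e1 hnd) from Paths.lift_toPath _ _]
        show (Gfun h adj K hK).toFunctor.map (eqToHom _ ≫
          ((adj.unit.app K).app (op ⦋1⦌) e1).map' 0 1 ≫ eqToHom _) = _
        simp only [Functor.map_comp]
        erw [eqToHom_map, eqToHom_map, h2']
        erw [Category.assoc, Category.assoc, eqToHom_trans_assoc, eqToHom_trans]
        rfl
    · -- G ≫ F = 𝟙
      apply (adj.homEquiv K (h.obj K)).injective
      rw [Adjunction.homEquiv_unit, Adjunction.homEquiv_unit]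
      simp only [Functor.map_comp, CategoryTheory.Functor.map_id, Category.comp_id,
        ← Category.assoc]
      show (adj.unit.app K ≫ nerveFunctor.map (Gfun h adj K hK)) ≫
        nerveFunctor.map (X := Cat.of (Paths (EdgeQuiver K))) (Y := h.obj K) (Ffun h adj K).toCatHom =
          adj.unit.app K
      rw [unit_comp_G h adj K hK]
      apply hom_ext_into_nerve
      · intro v
        show (nerveFunctor.map (X := Cat.of (Paths (EdgeQuiver K))) (Y := h.obj K)
            (Ffun h adj K).toCatHom).app (op ⦋0⦌) ((phi K hK).app (op ⦋0⦌) v) =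
          (adj.unit.app K).app (op ⦋0⦌) v
        rw [phi_app_zero]
        exact ComposableArrows.ext₀ rfl
      · intro e
        show (nerveFunctor.map (X := Cat.of (Paths (EdgeQuiver K))) (Y := h.obj K)
            (Ffun h adj K).toCatHom).app (op ⦋1⦌) ((phi K hK).app (op ⦋1⦌) e) =
          (adj.unit.app K).app (op ⦋1⦌) e
        rw [phi_app_one]
        by_cases hnd : ∀ z : K _⦋0⦌, K.σ 0 z ≠ e
        · simp only [theta, eq_true hnd, ↓reduceDIte]
          refine ComposableArrows.ext₁ (unit_app_src h adj K e) (unit_app_tgt h adj K e) ?_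
          show (Ffun h adj K).map (Quiver.Hom.toPath (gen K e hnd)) =
            eqToHom _ ≫ ComposableArrows.hom ((adj.unit.app K).app (op ⦋1⦌) e) ≫ eqToHom _
          rw [show (Ffun h adj K).map (Quiver.Hom.toPath (gen K e hnd)) =
            (Fpre h adj K).map (gen K e hnd) from Paths.lift_toPath _ _]
          rfl
        · simp only [theta, hnd, ↓reduceDIte]
          push_neg at hnd
          obtain ⟨z, hz⟩ := hnd
          have hnatF := NatTrans.naturality_apply (F := nerve (Paths (EdgeQuiver K)))
            (G := nerve (h.obj K))
            (nerveFunctor.map (X := Cat.of (Paths (EdgeQuiver K))) (Y := h.obj K)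
              (Ffun h adj K).toCatHom)
            (SimplexCategory.σ (0 : Fin 1)).op (Vmap K (K.δ 1 e))
          have hnatu := NatTrans.naturality_apply (adj.unit.app K)
            (SimplexCategory.σ (0 : Fin 1)).op z
          rw [show (nerve (Paths (EdgeQuiver K))).σ 0 (Vmap K (K.δ 1 e)) =
            (nerve (Paths (EdgeQuiver K))).map (SimplexCategory.σ (0 : Fin 1)).op
              (Vmap K (K.δ 1 e)) from rfl]
          refine hnatF.trans ?_
          rw [show e = K.σ 0 z from hz.symm, δ_one_σ_zero_apply]
          rw [show (adj.unit.app K).app (op ⦋1⦌) (K.σ 0 z) =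
            ((h ⋙ nerveFunctor).obj K).map (SimplexCategory.σ (0 : Fin 1)).op
              ((adj.unit.app K).app (op ⦋0⦌) z) from hnatu]
          exact congrArg ((nerve (h.obj K)).map (SimplexCategory.σ (0 : Fin 1)).op)
            (ComposableArrows.ext₀ rfl)

end SSetPaper
end

section
/- Let 𝒞 be a quasi-category and K a 1-skeletal simplicial set. Then for every functor u : hK ⥤ h𝒞 there exists a simplicial map f : K → 𝒞 with h(f) = u. (In other words, the forgetful comparison map from simplicial maps K → 𝒞 to functors hK ⥤ h𝒞 is surjective.) -/
open CategoryTheory Simplicial Opposite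

universe u

namespace SkelExt

open SSet SimplexCategory

variable {K X : SSet.{u}}

noncomputable def ext (hK : K.OneSkeletal) (f₀ : K _⦋0⦌ → X _⦋0⦌) (f₁ : K _⦋1⦌ → X _⦋1⦌) :
    ∀ n, K _⦋n⦌ → X _⦋n⦌ := fun n => match n with
  | 0 => f₀
  | 1 => f₁
  | (n+2) => fun x =>
      X.σ (hK n x).choose (ext hK f₀ f₁ (n+1) (hK n x).choose_spec.choose)

variable (hK : K.OneSkeletal) (f₀ : K _⦋0⦌ → X _⦋0⦌) (f₁ : K _⦋1⦌ → X _⦋1⦌)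

lemma ext_succ_succ (n : ℕ) (x : K _⦋n+2⦌) :
    ∃ (i : Fin (n+2)) (y : K _⦋n+1⦌), K.σ i y = x ∧
      ext hK f₀ f₁ (n+2) x = X.σ i (ext hK f₀ f₁ (n+1) y) :=
  ⟨_, _, (hK n x).choose_spec.choose_spec, rfl⟩

variable (hσ0 : ∀ v, f₁ (K.σ 0 v) = X.σ 0 (f₀ v))
  (hδ : ∀ (j : Fin 2) (k : K _⦋1⦌), f₀ (K.δ j k) = X.δ j (f₁ k))

include hσ0 hδ in
lemma ext_spec : ∀ n : ℕ,
    (∀ (x : K _⦋n⦌) (j : Fin (n+1)),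
        ext hK f₀ f₁ (n+1) (K.σ j x) = X.σ j (ext hK f₀ f₁ n x)) ∧
    (∀ (x : K _⦋n+1⦌) (j : Fin (n+2)),
        ext hK f₀ f₁ n (K.δ j x) = X.δ j (ext hK f₀ f₁ (n+1) x)) := by
  intro n
  induction n with
  | zero =>
    constructor
    · intro x j
      fin_cases j
      exact hσ0 x
    · intro x j
      exact hδ j x
  | succ m IH =>
    obtain ⟨Bm, Am⟩ := IH
    have B : ∀ (x : K _⦋m+1⦌) (j : Fin (m+2)),
        ext hK f₀ f₁ (m+2) (K.σ j x) = X.σ j (ext hK f₀ f₁ (m+1) x) := by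
      intro x j
      obtain ⟨i, y, hiy, hE⟩ := ext_succ_succ hK f₀ f₁ m (K.σ j x)
      rw [hE]
      rcases lt_trichotomy i j with hij | rfl | hij
      · -- i < j
        have hj0 : j ≠ 0 := Fin.pos_iff_ne_zero.mp (lt_of_le_of_lt (Fin.zero_le i) hij)
        obtain ⟨j₂, rfl⟩ : ∃ j₂ : Fin (m+1), j₂.succ = j := ⟨j.pred hj0, Fin.succ_pred j hj0⟩
        have hiLast : i ≠ Fin.last (m+1) := by
          intro h
          rw [h] at hij
          exact absurd hij (Fin.le_last _).not_gt
        obtain ⟨i₂, rfl⟩ : ∃ i₂ : Fin (m+1), i₂.castSucc = i :=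
          ⟨i.castPred hiLast, Fin.castSucc_castPred i hiLast⟩
        have hle : i₂ ≤ j₂ := by
          rw [Fin.lt_def, Fin.val_succ, Fin.coe_castSucc] at hij
          rw [Fin.le_def]; omega
        have hle' : (i₂.castSucc : Fin (m+2)) ≤ j₂.castSucc :=
          Fin.castSucc_le_castSucc_iff.mpr hle
        have hy : y = K.σ j₂ (K.δ i₂.castSucc x) := by
          have h1 := congrArg (K.δ i₂.castSucc.castSucc) hiy
          rwa [δ_comp_σ_self_apply, δ_comp_σ_of_le_apply hle'] at h1
        have hx : x = K.σ i₂ (K.δ i₂.castSucc x) := by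
          have h2 := congrArg (K.δ j₂.succ.succ) hiy
          rw [δ_comp_σ_succ_apply, δ_comp_σ_of_gt_apply
            (Fin.castSucc_lt_succ_iff.mpr hle), hy, δ_comp_σ_succ_apply] at h2
          exact h2.symm
        set z := K.δ i₂.castSucc x with hz
        rw [hy, Bm z j₂]
        conv_rhs => rw [hx, Bm z i₂]
        exact σ_comp_σ_apply hle (ext hK f₀ f₁ m z)
      · -- i = j
        have hyx : y = x := by
          have := congrArg (K.δ i.castSucc) hiy
          rwa [δ_comp_σ_self_apply, δ_comp_σ_self_apply] at this
        rw [hyx]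
      · -- j < i
        have hi0 : i ≠ 0 := Fin.pos_iff_ne_zero.mp (lt_of_le_of_lt (Fin.zero_le j) hij)
        obtain ⟨i₂, rfl⟩ : ∃ i₂ : Fin (m+1), i₂.succ = i := ⟨i.pred hi0, Fin.succ_pred i hi0⟩
        have hjLast : j ≠ Fin.last (m+1) := by
          intro h
          rw [h] at hij
          exact absurd hij (Fin.le_last _).not_gt
        obtain ⟨j₂, rfl⟩ : ∃ j₂ : Fin (m+1), j₂.castSucc = j :=
          ⟨j.castPred hjLast, Fin.castSucc_castPred j hjLast⟩
        have hle : j₂ ≤ i₂ := by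
          rw [Fin.lt_def, Fin.val_succ, Fin.coe_castSucc] at hij
          rw [Fin.le_def]; omega
        have hgt : (j₂.castSucc : Fin (m+2)) < i₂.succ :=
          Fin.castSucc_lt_succ_iff.mpr hle
        have hy : y = K.σ j₂ (K.δ i₂.succ x) := by
          have h1 := congrArg (K.δ i₂.succ.succ) hiy
          rwa [δ_comp_σ_succ_apply, δ_comp_σ_of_gt_apply hgt] at h1
        have hx : x = K.σ i₂ (K.δ i₂.succ x) := by
          have h2 := congrArg (K.δ j₂.castSucc.castSucc) hiy
          rw [δ_comp_σ_self_apply,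
            δ_comp_σ_of_le_apply (Fin.castSucc_le_castSucc_iff.mpr hle), hy,
            δ_comp_σ_self_apply] at h2
          exact h2.symm
        set z := K.δ i₂.succ x with hz
        rw [hy, Bm z j₂]
        conv_rhs => rw [hx, Bm z i₂]
        exact (σ_comp_σ_apply hle (ext hK f₀ f₁ m z)).symm
    refine ⟨B, ?_⟩
    intro x j
    obtain ⟨i, y, hiy, hE⟩ := ext_succ_succ hK f₀ f₁ m x
    rw [hE, ← hiy]
    rcases lt_trichotomy j i.castSucc with hj | rfl | hj
    · -- j < i.castSucc
      have hi0 : i ≠ 0 := by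
        intro h
        rw [h] at hj
        simp [Fin.lt_def] at hj
      obtain ⟨i₂, rfl⟩ : ∃ i₂ : Fin (m+1), i₂.succ = i := ⟨i.pred hi0, Fin.succ_pred i hi0⟩
      have hjLast : j ≠ Fin.last (m+2) := by
        intro h
        rw [h] at hj
        exact absurd hj (Fin.le_last _).not_gt
      obtain ⟨j₂, rfl⟩ : ∃ j₂ : Fin (m+2), j₂.castSucc = j :=
        ⟨j.castPred hjLast, Fin.castSucc_castPred j hjLast⟩
      have hle : j₂ ≤ i₂.castSucc := by
        rw [Fin.lt_def] at hj
        simp only [Fin.coe_castSucc, Fin.val_succ] at hj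
        rw [Fin.le_def]; simp only [Fin.coe_castSucc]; omega
      rw [δ_comp_σ_of_le_apply hle, δ_comp_σ_of_le_apply hle, Bm (K.δ j₂ y) i₂, Am y j₂]
    · -- j = i.castSucc
      rw [δ_comp_σ_self_apply, δ_comp_σ_self_apply]
    · -- i.castSucc < j
      rcases eq_or_lt_of_le (Fin.castSucc_lt_iff_succ_le.mp hj) with hj2 | hj2
      · rw [← hj2, δ_comp_σ_succ_apply, δ_comp_σ_succ_apply]
      · -- i.succ < j
        have hj0 : j ≠ 0 :=
          Fin.pos_iff_ne_zero.mp (lt_of_le_of_lt (Fin.zero_le _) hj)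
        obtain ⟨j₂, rfl⟩ : ∃ j₂ : Fin (m+2), j₂.succ = j := ⟨j.pred hj0, Fin.succ_pred j hj0⟩
        have hij₂ : i < j₂ := Fin.succ_lt_succ_iff.mp hj2
        have hiLast : i ≠ Fin.last (m+1) := Fin.ne_last_of_lt hij₂
        obtain ⟨i₂, rfl⟩ : ∃ i₂ : Fin (m+1), i₂.castSucc = i :=
          ⟨i.castPred hiLast, Fin.castSucc_castPred i hiLast⟩
        rw [δ_comp_σ_of_gt_apply hij₂, δ_comp_σ_of_gt_apply hij₂, Bm (K.δ j₂ y) i₂, Am y j₂]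

include hσ0 hδ in
lemma ext_map : ∀ (N a b : ℕ), a + b ≤ N → ∀ (g : (⦋a⦌ : SimplexCategory) ⟶ ⦋b⦌) (x : K _⦋b⦌),
    ext hK f₀ f₁ a (K.map g.op x) = X.map g.op (ext hK f₀ f₁ b x) := by
  have hsub : ∀ u v : Fin (SimplexCategory.len ⦋0⦌ + 1), u = v :=
    fun u v => @Subsingleton.elim (Fin 1) _ u v
  intro N
  induction N with
  | zero =>
    intro a b hab g x
    obtain rfl : a = 0 := by omega
    obtain rfl : b = 0 := by omega
    obtain rfl : g = 𝟙 _ := by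
      have : IsIso g := SimplexCategory.isIso_of_bijective
        ⟨fun u v _ => hsub u v, fun u => ⟨u, hsub _ _⟩⟩
      exact SimplexCategory.eq_id_of_isIso g
    simp only [op_id, FunctorToTypes.map_id_apply]
  | succ N IHN =>
    intro a b hab g x
    by_cases hsurj : Function.Surjective g.toOrderHom
    · by_cases hinj : Function.Injective g.toOrderHom
      · have hab' : a = b := by
          have := Fintype.card_of_bijective (⟨hinj, hsurj⟩ : Function.Bijective g.toOrderHom)
          simpa using this
        subst hab'
        obtain rfl : g = 𝟙 _ := by
          have : IsIso g := SimplexCategory.isIso_of_bijective ⟨hinj, hsurj⟩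
          exact SimplexCategory.eq_id_of_isIso g
        simp only [op_id, FunctorToTypes.map_id_apply]
      · -- not injective, so a ≥ 1
        match a, g with
        | 0, g => exact absurd (fun u v _ => hsub u v) hinj
        | (a'+1), g =>
          obtain ⟨i, g', rfl⟩ := SimplexCategory.eq_σ_comp_of_not_injective g hinj
          rw [op_comp, FunctorToTypes.map_comp_apply, FunctorToTypes.map_comp_apply]
          have h1 : (K.map (SimplexCategory.σ i).op) (K.map g'.op x)
              = K.σ i (K.map g'.op x) := rfl
          rw [h1, (ext_spec hK f₀ f₁ hσ0 hδ a').1 (K.map g'.op x) i,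
            IHN a' b (by omega) g' x]
          rfl
    · -- not surjective, so b ≥ 1
      match b, g, x with
      | 0, g, x =>
        exact absurd (fun u => ⟨⟨0, Nat.succ_pos _⟩, hsub _ _⟩) hsurj
      | (b'+1), g, x =>
        obtain ⟨i, g', rfl⟩ := SimplexCategory.eq_comp_δ_of_not_surjective g hsurj
        rw [op_comp, FunctorToTypes.map_comp_apply, FunctorToTypes.map_comp_apply]
        have h1 : (K.map (SimplexCategory.δ i).op) x = K.δ i x := rfl
        rw [h1, IHN a b' (by omega) g' (K.δ i x),
          (ext_spec hK f₀ f₁ hσ0 hδ b').2 x i]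
        rfl

include hσ0 hδ in
noncomputable def extHom : K ⟶ X where
  app m := ↾(ext hK f₀ f₁ m.unop.len)
  naturality m m' f := by
    ext x
    have h := ext_map hK f₀ f₁ hσ0 hδ ((unop m').len + (unop m).len) (unop m').len
      (unop m).len le_rfl f.unop x
    exact h

lemma extHom_app_zero (v : K _⦋0⦌) : (extHom hK f₀ f₁ hσ0 hδ).app (op ⦋0⦌) v = f₀ v := rfl

lemma extHom_app_one (e : K _⦋1⦌) : (extHom hK f₀ f₁ hσ0 hδ).app (op ⦋1⦌) e = f₁ e := rfl

end SkelExt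
namespace NerveGlue

open SSet SimplexCategory

variable {X : SSet.{u}} {C : Type u} [Category.{u} C] (t : X ⟶ nerve C)

/-- The object of `C` associated to a vertex of `X`. -/
def nv (a : X _⦋0⦌) : C := (t.app (op ⦋0⦌) a).obj 0

lemma napp {a b : ℕ} (g : (⦋a⦌ : SimplexCategory) ⟶ ⦋b⦌) (x : X _⦋b⦌) :
    t.app (op ⦋a⦌) (X.map g.op x) = (nerve C).map g.op (t.app (op ⦋b⦌) x) :=
  NatTrans.naturality_apply t g.op x

lemma nv_vtx {n : ℕ} (x : X _⦋n⦌) (i : Fin (n+1)) :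
    nv t (X.map (SimplexCategory.const ⦋0⦌ ⦋n⦌ i).op x) = (t.app (op ⦋n⦌) x).obj i := by
  rw [nv, napp]
  rfl

/-- The morphism of `C` associated to an abstract edge of an `n`-simplex. -/
noncomputable def arr {n : ℕ} (x : X _⦋n⦌) (i j : Fin (n+1)) (hij : i ≤ j) :
    nv t (X.map (SimplexCategory.const ⦋0⦌ ⦋n⦌ i).op x) ⟶
      nv t (X.map (SimplexCategory.const ⦋0⦌ ⦋n⦌ j).op x) :=
  eqToHom (nv_vtx t x i) ≫ (t.app (op ⦋n⦌) x).map (homOfLE hij) ≫ eqToHom (nv_vtx t x j).symm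

lemma app_edge {n : ℕ} (x : X _⦋n⦌) (i j : Fin (n+1)) (hij : i ≤ j) :
    t.app (op ⦋1⦌) (X.map (mkOfLe i j hij).op x) = ComposableArrows.mk₁ (arr t x i j hij) := by
  rw [napp]
  refine ComposableArrows.ext₁ ?_ ?_ ?_
  · exact (nv_vtx t x i).symm
  · exact (nv_vtx t x j).symm
  · show ((nerve C).map (mkOfLe i j hij).op (t.app (op ⦋n⦌) x)).hom = _
    have h1 : ((nerve C).map (mkOfLe i j hij).op (t.app (op ⦋n⦌) x)).hom
        = (t.app (op ⦋n⦌) x).map (homOfLE hij) := by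
      show (t.app (op ⦋n⦌) x).map _ = _
      congr 1
    rw [h1]
    show _ = eqToHom _ ≫ arr t x i j hij ≫ eqToHom _
    rw [arr]
    simp
    erw [eqToHom_trans]
    exact (Category.comp_id _).symm

lemma app_sigma (a : X _⦋0⦌) :
    t.app (op ⦋1⦌) (X.σ 0 a) = ComposableArrows.mk₁ (𝟙 (nv t a)) := by
  have h : X.σ 0 a = X.map (SimplexCategory.σ (0 : Fin 1)).op a := rfl
  rw [h, napp]
  refine ComposableArrows.ext₁ rfl rfl ?_
  show ((nerve C).map (SimplexCategory.σ (0 : Fin 1)).op (t.app (op ⦋0⦌) a)).hom = _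
  have h1 : ((nerve C).map (SimplexCategory.σ (0 : Fin 1)).op (t.app (op ⦋0⦌) a)).hom
      = (t.app (op ⦋0⦌) a).map (𝟙 0) := by
    show (t.app (op ⦋0⦌) a).map _ = _
    congr 1
  rw [h1]
  simp [nv]
  erw [CategoryTheory.Functor.map_id, Category.id_comp, eqToHom_trans]
  exact (eqToHom_refl _ _).symm
  rfl

lemma conj_comp {A₀ A B B₁ Z Z₀ : C} (φ : A ⟶ B) (ψ : B ⟶ Z) (p : A₀ = A) (q : B = B₁)
    (r : B₁ = B) (s : Z = Z₀) (p' : A₀ = A) (s' : Z = Z₀) :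
    (eqToHom p ≫ φ ≫ eqToHom q) ≫ eqToHom r ≫ ψ ≫ eqToHom s
      = eqToHom p' ≫ (φ ≫ ψ) ≫ eqToHom s' := by
  subst p q s
  simp

lemma conj_assoc {P P₁ P₂ Q R R₁ R₂ R₃ : C} (M : Q ⟶ R) (a : P = P₁) (b : P₁ = Q)
    (c : R = R₁) (d : R₁ = R₂) (a' : P = P₂) (b' : P₂ = Q) (c' : R = R₃) (d' : R₃ = R₂) :
    eqToHom a ≫ (eqToHom b ≫ M ≫ eqToHom c) ≫ eqToHom d
      = eqToHom a' ≫ (eqToHom b' ≫ M ≫ eqToHom c') ≫ eqToHom d' := by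
  subst a b c d
  subst a' c'
  simp

lemma comp_face {w : X _⦋2⦌} {A B Z : C} (φ : A ⟶ B) (ψ : B ⟶ Z)
    (h2 : t.app (op ⦋1⦌) (X.δ 2 w) = ComposableArrows.mk₁ φ)
    (h0 : t.app (op ⦋1⦌) (X.δ 0 w) = ComposableArrows.mk₁ ψ) :
    t.app (op ⦋1⦌) (X.δ 1 w) = ComposableArrows.mk₁ (φ ≫ ψ) := by
  have e : ∀ i : Fin 3, t.app (op ⦋1⦌) (X.δ i w)
      = (nerve C).map (SimplexCategory.δ i).op (t.app (op ⦋2⦌) w) := fun i => napp t _ w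
  set z := t.app (op ⦋2⦌) w with hz
  rw [e] at h2 h0 ⊢
  -- objects
  have o2 := Functor.congr_obj h2
  have o0 := Functor.congr_obj h0
  have l1 : z.obj 0 = A := o2 0
  have l2 : z.obj 1 = B := o2 1
  have l3 : z.obj 2 = Z := o0 1
  refine ComposableArrows.ext₁ l1 l3 ?_
  have m2 := Functor.congr_hom h2 (homOfLE (by decide : (0 : Fin 2) ≤ 1))
  have m0 := Functor.congr_hom h0 (homOfLE (by decide : (0 : Fin 2) ≤ 1))
  have hmap2 : ((nerve C).map (SimplexCategory.δ (2 : Fin 3)).op z).map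
      (homOfLE (by decide : (0 : Fin 2) ≤ 1)) = z.map (homOfLE (by decide : (0:Fin 3) ≤ 1)) := by
    show z.map _ = z.map _
    congr 1
  have hmap0 : ((nerve C).map (SimplexCategory.δ (0 : Fin 3)).op z).map
      (homOfLE (by decide : (0 : Fin 2) ≤ 1)) = z.map (homOfLE (by decide : (1:Fin 3) ≤ 2)) := by
    show z.map _ = z.map _
    congr 1
  have hmap1 : ((nerve C).map (SimplexCategory.δ (1 : Fin 3)).op z).hom
      = z.map (homOfLE (by decide : (0:Fin 3) ≤ 2)) := by
    show z.map _ = z.map _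
    congr 1
  have hcomp : z.map (homOfLE (by decide : (0:Fin 3) ≤ 2))
      = z.map (homOfLE (by decide : (0:Fin 3) ≤ 1)) ≫ z.map (homOfLE (by decide : (1:Fin 3) ≤ 2)) := by
    rw [← z.map_comp]
    congr 1
  rw [hmap2] at m2
  rw [hmap0] at m0
  rw [hmap1, hcomp, m2, m0]
  have hφ : (ComposableArrows.mk₁ φ).map (homOfLE (by decide : (0 : Fin 2) ≤ 1)) = φ := rfl
  have hψ : (ComposableArrows.mk₁ ψ).map (homOfLE (by decide : (0 : Fin 2) ≤ 1)) = ψ := rfl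
  rw [hφ, hψ]
  exact conj_comp φ ψ _ _ _ _ _ _


lemma arr_refl {n : ℕ} (x : X _⦋n⦌) (i : Fin (n+1)) : arr t x i i le_rfl = 𝟙 _ := by
  rw [arr]
  have h1 : (homOfLE (le_refl i) : i ⟶ i) = 𝟙 i := Subsingleton.elim _ _
  rw [h1]
  erw [CategoryTheory.Functor.map_id]
  simp

lemma arr_trans {n : ℕ} (x : X _⦋n⦌) {i j k : Fin (n+1)} (h1 : i ≤ j) (h2 : j ≤ k) :
    arr t x i k (h1.trans h2) = arr t x i j h1 ≫ arr t x j k h2 := by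
  rw [arr, arr, arr]
  have h3 : (homOfLE (h1.trans h2) : i ⟶ k) = homOfLE h1 ≫ homOfLE h2 :=
    Subsingleton.elim _ _
  rw [h3]
  erw [Functor.map_comp]
  simp

lemma vtx_natural {a b : ℕ} (g : (⦋a⦌ : SimplexCategory) ⟶ ⦋b⦌) (x : X _⦋b⦌) (i : Fin (a+1)) :
    X.map (SimplexCategory.const ⦋0⦌ ⦋a⦌ i).op (X.map g.op x)
      = X.map (SimplexCategory.const ⦋0⦌ ⦋b⦌ (g.toOrderHom i)).op x := by
  rw [← FunctorToTypes.map_comp_apply, ← op_comp, SimplexCategory.const_comp]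

lemma arr_natural {a b : ℕ} (g : (⦋a⦌ : SimplexCategory) ⟶ ⦋b⦌) (x : X _⦋b⦌)
    (i j : Fin (a+1)) (hij : i ≤ j) :
    arr t (X.map g.op x) i j hij
      = eqToHom (congrArg (nv t) (vtx_natural g x i)) ≫
          arr t x (g.toOrderHom i) (g.toOrderHom j) (g.toOrderHom.monotone hij) ≫
          eqToHom (congrArg (nv t) (vtx_natural g x j)).symm := by
  have hnat := napp t g x
  have hm := Functor.congr_hom hnat (homOfLE hij)
  have hw : ((nerve C).map g.op (t.app (op ⦋b⦌) x)).map (homOfLE hij)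
      = (t.app (op ⦋b⦌) x).map (homOfLE (g.toOrderHom.monotone hij)) := by
    show (t.app (op ⦋b⦌) x).map _ = (t.app (op ⦋b⦌) x).map _
    congr 1
  rw [hw] at hm
  rw [arr, arr, hm]
  exact conj_assoc (C := C) _ _ _ _ _ _ _ _ _

lemma const_zero_eq_δ_one : (SimplexCategory.const ⦋0⦌ ⦋1⦌ 0) = SimplexCategory.δ 1 := by
  apply SimplexCategory.Hom.ext
  apply OrderHom.ext
  funext k
  fin_cases k
  decide

lemma const_one_eq_δ_zero : (SimplexCategory.const ⦋0⦌ ⦋1⦌ 1) = SimplexCategory.δ 0 := by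
  apply SimplexCategory.Hom.ext
  apply OrderHom.ext
  funext k
  fin_cases k
  decide

lemma delta_one_eq_vtx (k : X _⦋1⦌) :
    X.δ 1 k = X.map (SimplexCategory.const ⦋0⦌ ⦋1⦌ 0).op k := by
  rw [const_zero_eq_δ_one]
  rfl

lemma delta_zero_eq_vtx (k : X _⦋1⦌) :
    X.δ 0 k = X.map (SimplexCategory.const ⦋0⦌ ⦋1⦌ 1).op k := by
  rw [const_one_eq_δ_zero]
  rfl

lemma mkOfLe_zero_one (hle : (0 : Fin 2) ≤ 1) :
    mkOfLe (0 : Fin 2) 1 hle = 𝟙 (⦋1⦌ : SimplexCategory) := by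
  apply SimplexCategory.Hom.ext
  apply OrderHom.ext
  funext k
  fin_cases k <;> rfl

lemma app_one (k : X _⦋1⦌) (hle : (0 : Fin 2) ≤ 1) :
    t.app (op ⦋1⦌) k = ComposableArrows.mk₁ (arr t k 0 1 hle) := by
  have h := app_edge t k 0 1 hle
  rwa [mkOfLe_zero_one, op_id, FunctorToTypes.map_id_apply] at h

lemma δ_one_mkOfLe {n : ℕ} (i j : Fin (n+1)) (hij : i ≤ j) :
    SimplexCategory.δ 1 ≫ mkOfLe i j hij = SimplexCategory.const ⦋0⦌ ⦋n⦌ i := by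
  apply SimplexCategory.Hom.ext
  apply OrderHom.ext
  funext k
  fin_cases k
  rfl

lemma δ_zero_mkOfLe {n : ℕ} (i j : Fin (n+1)) (hij : i ≤ j) :
    SimplexCategory.δ 0 ≫ mkOfLe i j hij = SimplexCategory.const ⦋0⦌ ⦋n⦌ j := by
  apply SimplexCategory.Hom.ext
  apply OrderHom.ext
  funext k
  fin_cases k
  rfl

lemma delta_one_edge {n : ℕ} (x : X _⦋n⦌) (i j : Fin (n+1)) (hij : i ≤ j) :
    X.δ 1 (X.map (mkOfLe i j hij).op x) = X.map (SimplexCategory.const ⦋0⦌ ⦋n⦌ i).op x := by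
  show X.map (SimplexCategory.δ 1).op (X.map (mkOfLe i j hij).op x) = _
  rw [← FunctorToTypes.map_comp_apply, ← op_comp, δ_one_mkOfLe]

lemma delta_zero_edge {n : ℕ} (x : X _⦋n⦌) (i j : Fin (n+1)) (hij : i ≤ j) :
    X.δ 0 (X.map (mkOfLe i j hij).op x) = X.map (SimplexCategory.const ⦋0⦌ ⦋n⦌ j).op x := by
  show X.map (SimplexCategory.δ 0).op (X.map (mkOfLe i j hij).op x) = _
  rw [← FunctorToTypes.map_comp_apply, ← op_comp, δ_zero_mkOfLe]

lemma mk₁_conj {A A' B B' : C} (h1 : A' = A) (h2 : B = B') (φ : A ⟶ B) :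
    ComposableArrows.mk₁ (eqToHom h1 ≫ φ ≫ eqToHom h2) = ComposableArrows.mk₁ φ :=
  ComposableArrows.ext₁ h1 h2.symm rfl

lemma mk₁_id_congr {A B : C} (h : A = B) :
    ComposableArrows.mk₁ (𝟙 A) = ComposableArrows.mk₁ (𝟙 B) := by subst h; rfl

lemma hom_ext_01 {K : SSet.{u}} (t₁ t₂ : K ⟶ nerve C)
    (h0 : ∀ v : K _⦋0⦌, t₁.app (op ⦋0⦌) v = t₂.app (op ⦋0⦌) v)
    (h1 : ∀ e : K _⦋1⦌, t₁.app (op ⦋1⦌) e = t₂.app (op ⦋1⦌) e) : t₁ = t₂ := by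
  apply NatTrans.ext
  funext m
  ext x
  apply (Nerve.strictSegal C).spineInjective (n := m.unop.len)
  dsimp only [SSet.StrictSegal.spineEquiv, Equiv.coe_fn_mk]
  apply SSet.Path.ext
  · funext i
    exact (NatTrans.naturality_apply t₁
        (SimplexCategory.const ⦋0⦌ ⦋m.unop.len⦌ i).op x).symm.trans
      ((h0 _).trans (NatTrans.naturality_apply t₂
        (SimplexCategory.const ⦋0⦌ ⦋m.unop.len⦌ i).op x))
  · funext i
    exact (NatTrans.naturality_apply t₁ (mkOfSucc i).op x).symm.trans
      ((h1 _).trans (NatTrans.naturality_apply t₂ (mkOfSucc i).op x))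
end NerveGlue

namespace HornGlue

open SSet SimplexCategory

variable {S : SSet.{u}}

variable (e e' : S _⦋1⦌) (h : S.δ 0 e = S.δ 1 e')

include h in
lemma exists_comp [SSet.Quasicategory S] :
    ∃ w : S _⦋2⦌, S.δ 2 w = e ∧ S.δ 0 w = e' := by
  have sq := horn₂₁.isPushout.{u}
  have hc : stdSimplex.δ (0 : Fin 2) ≫ yonedaEquiv.symm e
      = stdSimplex.δ (1 : Fin 2) ≫ yonedaEquiv.symm e' := by
    rw [stdSimplex.δ_comp_yonedaEquiv_symm, stdSimplex.δ_comp_yonedaEquiv_symm, h]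
  obtain ⟨σ, hσ⟩ := SSet.Quasicategory.hornFilling (n := 2) (i := 1)
    (by decide) (by decide) (sq.desc _ _ hc)
  refine ⟨yonedaEquiv σ, ?_, ?_⟩
  · rw [← stdSimplex.yonedaEquiv_δ_comp, ← horn.ι_ι_assoc 1 2 (by decide), ← hσ,
      sq.inl_desc, Equiv.apply_symm_apply]
  · rw [← stdSimplex.yonedaEquiv_δ_comp, ← horn.ι_ι_assoc 1 0 (by decide), ← hσ,
      sq.inr_desc, Equiv.apply_symm_apply]

end HornGlue

namespace DPart

open SSet SimplexCategory NerveGlue HornGlue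

variable {𝒞 : SSet.{u}} {C : Type u} [Category.{u} C] (p : 𝒞 ⟶ nerve C)

/-- Objects of the representable subcategory: vertices of `𝒞`. -/
structure DObj (p : 𝒞 ⟶ nerve C) : Type u where
  pt : 𝒞 _⦋0⦌

/-- A morphism is representable by an edge of `𝒞`. -/
def EdgeRep (a b : 𝒞 _⦋0⦌) (φ : nv p a ⟶ nv p b) : Prop :=
  ∃ e : 𝒞 _⦋1⦌, 𝒞.δ 1 e = a ∧ 𝒞.δ 0 e = b ∧
    p.app (op ⦋1⦌) e = ComposableArrows.mk₁ φ

lemma edgeRep_id (a : 𝒞 _⦋0⦌) : EdgeRep p a a (𝟙 (nv p a)) :=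
  ⟨𝒞.σ 0 a, δ_comp_σ_succ_apply 0 a, δ_comp_σ_self_apply 0 a, app_sigma p a⟩

lemma edgeRep_comp [SSet.Quasicategory 𝒞] {a b c : 𝒞 _⦋0⦌} {φ : nv p a ⟶ nv p b}
    {ψ : nv p b ⟶ nv p c} (hφ : EdgeRep p a b φ) (hψ : EdgeRep p b c ψ) :
    EdgeRep p a c (φ ≫ ψ) := by
  obtain ⟨e, he1, he0, heapp⟩ := hφ
  obtain ⟨e', hf1, hf0, hfapp⟩ := hψ
  obtain ⟨w, hw2, hw0⟩ := exists_comp e e' (he0.trans hf1.symm)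
  refine ⟨𝒞.δ 1 w, ?_, ?_, ?_⟩
  · rw [show 𝒞.δ 1 (𝒞.δ 1 w) = 𝒞.δ 1 (𝒞.δ 2 w) from
      δ_comp_δ_self_apply (i := (1 : Fin 2)) w, hw2, he1]
  · rw [show 𝒞.δ 0 (𝒞.δ 1 w) = 𝒞.δ 0 (𝒞.δ 0 w) from
      δ_comp_δ_apply (i := (0 : Fin 2)) (j := (0 : Fin 2)) le_rfl w, hw0, hf0]
  · exact comp_face p φ ψ (by rw [hw2]; exact heapp) (by rw [hw0]; exact hfapp)

variable [SSet.Quasicategory 𝒞]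

instance dcat : Category.{u} (DObj p) where
  Hom A B := {φ : nv p A.pt ⟶ nv p B.pt // EdgeRep p A.pt B.pt φ}
  id A := ⟨𝟙 _, edgeRep_id p A.pt⟩
  comp f g := ⟨f.1 ≫ g.1, edgeRep_comp p f.2 g.2⟩
  id_comp f := Subtype.ext (Category.id_comp f.1)
  comp_id f := Subtype.ext (Category.comp_id f.1)
  assoc f g h := Subtype.ext (Category.assoc f.1 g.1 h.1)

/-- The tautological functor from the subcategory of representables to `C`. -/
def ι : DObj p ⥤ C where
  obj A := nv p A.pt
  map f := f.1

lemma DObj_eqToHom_val {A B : DObj p} (h : A = B) :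
    (eqToHom h : A ⟶ B).1 = eqToHom (congrArg (fun o : DObj p => nv p o.pt) h) := by
  subst h; rfl

lemma dcomp_val {A B C' : DObj p} (u : A ⟶ B) (v : B ⟶ C') : (u ≫ v).1 = u.1 ≫ v.1 := rfl

lemma edgeRep_arr {n : ℕ} (x : 𝒞 _⦋n⦌) {i j : Fin (n+1)} (hij : i ≤ j) :
    EdgeRep p (𝒞.map (SimplexCategory.const ⦋0⦌ ⦋n⦌ i).op x)
      (𝒞.map (SimplexCategory.const ⦋0⦌ ⦋n⦌ j).op x) (arr p x i j hij) :=
  ⟨𝒞.map (mkOfLe i j hij).op x, delta_one_edge x i j hij, delta_zero_edge x i j hij,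
    app_edge p x i j hij⟩

/-- The components of the comparison map `𝒞 ⟶ nerve (DObj p)`. -/
noncomputable def qApp (n : ℕ) (x : 𝒞 _⦋n⦌) : ComposableArrows (DObj p) n where
  obj i := ⟨𝒞.map (SimplexCategory.const ⦋0⦌ ⦋n⦌ i).op x⟩
  map {i j} f := ⟨arr p x i j (leOfHom f), edgeRep_arr p x (leOfHom f)⟩
  map_id i := Subtype.ext (arr_refl p x i)
  map_comp {i j k} f g := Subtype.ext (arr_trans p x (leOfHom f) (leOfHom g))

lemma qApp_natural (a b : ℕ) (g : (⦋a⦌ : SimplexCategory) ⟶ ⦋b⦌) (x : 𝒞 _⦋b⦌) :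
    qApp p a (𝒞.map g.op x) = (nerve (DObj p)).map g.op (qApp p b x) := by
  refine ComposableArrows.ext (fun i => ?_) (fun i hi => ?_)
  · show DObj.mk _ = DObj.mk _
    congr 1
    exact vtx_natural g x i
  · apply Subtype.ext
    simp only [dcomp_val, DObj_eqToHom_val]
    exact arr_natural p g x ⟨i, by omega⟩ ⟨i+1, by omega⟩ (by simp [Fin.le_def])

/-- The comparison map `𝒞 ⟶ nerve (DObj p)`. -/
noncomputable def qHom : 𝒞 ⟶ nerve (DObj p) where
  app m := ↾(qApp p m.unop.len)
  naturality m m' f := by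
    ext x
    exact qApp_natural p m'.unop.len m.unop.len f.unop x

lemma ι_comp_qApp (n : ℕ) (x : 𝒞 _⦋n⦌) :
    ((ι p).mapComposableArrows n).obj (qApp p n x) = p.app (op ⦋n⦌) x := by
  refine ComposableArrows.ext (fun i => nv_vtx p x i) (fun i hi => ?_)
  show (ι p).map ((qApp p n x).map' i (i+1)) = _
  show arr p x _ _ _ = _
  rw [arr]
  rfl

end DPart

namespace DPart

open SSet SimplexCategory NerveGlue

variable {𝒞 : SSet.{u}} {C : Type u} [Category.{u} C] (p : 𝒞 ⟶ nerve C)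
  [SSet.Quasicategory 𝒞]
variable {K : SSet.{u}} (g : K ⟶ nerve C)
variable (r : C ⥤ DObj p)
variable (hobj : ∀ X : C, nv p ((r.obj X).pt) = X)

/-- Chosen vertices. -/
def f0 (v : K _⦋0⦌) : 𝒞 _⦋0⦌ := (r.obj (nv g v)).pt

/-- The morphism of `C` determined by an edge of `K`. -/
noncomputable def zeta (k : K _⦋1⦌) : nv g (K.δ 1 k) ⟶ nv g (K.δ 0 k) :=
  eqToHom (congrArg (nv g) (delta_one_eq_vtx k)) ≫ arr g k 0 1 (by decide) ≫
    eqToHom (congrArg (nv g) (delta_zero_eq_vtx k)).symm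

/-- The same morphism, transported to the chosen vertices. -/
noncomputable def chi (k : K _⦋1⦌) :
    nv p (f0 p g r (K.δ 1 k)) ⟶ nv p (f0 p g r (K.δ 0 k)) :=
  eqToHom (hobj (nv g (K.δ 1 k))) ≫ zeta g k ≫ eqToHom (hobj (nv g (K.δ 0 k))).symm

/-- The requirement on a chosen edge of `𝒞` over an edge of `K`. -/
def Spec (k : K _⦋1⦌) (e : 𝒞 _⦋1⦌) : Prop :=
  𝒞.δ 1 e = f0 p g r (K.δ 1 k) ∧ 𝒞.δ 0 e = f0 p g r (K.δ 0 k) ∧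
    p.app (op ⦋1⦌) e = ComposableArrows.mk₁ (chi p g r hobj k) ∧
    (k = K.σ 0 (K.δ 0 k) → e = 𝒞.σ 0 (f0 p g r (K.δ 0 k)))

variable (hhom : ∀ {X Y : C} (φ : X ⟶ Y),
  (r.map φ).1 = eqToHom (hobj X) ≫ φ ≫ eqToHom (hobj Y).symm)

include hhom in
lemma spec_exists (k : K _⦋1⦌) : ∃ e, Spec p g r hobj k e := by
  by_cases hdeg : k = K.σ 0 (K.δ 0 k)
  · refine ⟨𝒞.σ 0 (f0 p g r (K.δ 0 k)), ?_, ?_, ?_, fun _ => rfl⟩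
    · have h10 : K.δ 1 k = K.δ 0 k := by
        conv_lhs => rw [hdeg]
        rw [δ_comp_σ_succ'_apply (show (1 : Fin 2) = Fin.succ 0 from rfl)]
      rw [δ_comp_σ_succ'_apply (show (1 : Fin 2) = Fin.succ 0 from rfl), h10]
    · rw [δ_comp_σ_self'_apply (show (0 : Fin 2) = Fin.castSucc 0 from rfl)]
    · rw [app_sigma p]
      simp only [chi, zeta]
      erw [mk₁_conj, mk₁_conj, ← app_one g k]
      conv_rhs => rw [hdeg]
      rw [app_sigma g]
      exact mk₁_id_congr (hobj (nv g (K.δ 0 k)))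
  · obtain ⟨e, h1, h0, happ⟩ := (r.map (zeta g k)).2
    refine ⟨e, h1, h0, ?_, fun hk => absurd hk hdeg⟩
    rw [happ]
    exact congrArg ComposableArrows.mk₁ (hhom (zeta g k))

/-- Chosen edges. -/
noncomputable def f1 (k : K _⦋1⦌) : 𝒞 _⦋1⦌ :=
  (spec_exists p g r hobj hhom k).choose

lemma f1_spec (k : K _⦋1⦌) : Spec p g r hobj k (f1 p g r hobj hhom k) :=
  (spec_exists p g r hobj hhom k).choose_spec

lemma f1_sigma (v : K _⦋0⦌) :
    f1 p g r hobj hhom (K.σ 0 v) = 𝒞.σ 0 (f0 p g r v) := by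
  have h4 := (f1_spec p g r hobj hhom (K.σ 0 v)).2.2.2
  have hdeg : K.σ 0 v = K.σ 0 (K.δ 0 (K.σ 0 v)) := by rw [δ_comp_σ_self'_apply (show (0 : Fin 2) = Fin.castSucc 0 from rfl)]
  rw [h4 hdeg, δ_comp_σ_self'_apply (show (0 : Fin 2) = Fin.castSucc 0 from rfl)]

lemma f1_delta (j : Fin 2) (k : K _⦋1⦌) :
    f0 p g r (K.δ j k) = 𝒞.δ j (f1 p g r hobj hhom k) := by
  fin_cases j
  · exact ((f1_spec p g r hobj hhom k).2.1).symm
  · exact ((f1_spec p g r hobj hhom k).1).symm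

end DPart

open SkelExt NerveGlue DPart in
/-- Let `𝒞` be a quasi-category and `K` a 1-skeletal simplicial set.
Then every functor `u : hK ⥤ h𝒞` is of the form `h(f)` for some simplicial map
`f : K ⟶ 𝒞`; that is, the comparison map from simplicial maps `K ⟶ 𝒞` to functors
`hK ⥤ h𝒞` is surjective. -/
theorem surjective_homotopyFunctor_of_oneSkeletal
    (h : SSet.{u} ⥤ Cat.{u, u}) (adj : h ⊣ nerveFunctor.{u, u})
    (𝒞 K : SSet.{u}) [SSet.Quasicategory 𝒞] (hK : K.OneSkeletal) :
    ∀ u : h.obj K ⟶ h.obj 𝒞, ∃ f : K ⟶ 𝒞, h.map f = u := by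
  intro u
  set p : 𝒞 ⟶ nerve ↑(h.obj 𝒞) := adj.unit.app 𝒞 with hp
  set g : K ⟶ nerve ↑(h.obj 𝒞) := adj.homEquiv K (h.obj 𝒞) u with hg
  set r : (h.obj 𝒞) ⟶ Cat.of (DObj p) :=
    (adj.homEquiv 𝒞 (Cat.of (DObj p))).symm (qHom p) with hr
  have hfac : qHom p ≫ nerveFunctor.map
      (show Cat.of (DObj p) ⟶ h.obj 𝒞 from (DPart.ι p).toCatHom) = p := by
    apply NatTrans.ext
    funext m
    ext x
    exact DPart.ι_comp_qApp p m.unop.len x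
  have hretr : r ≫ (show Cat.of (DObj p) ⟶ h.obj 𝒞 from (DPart.ι p).toCatHom) = 𝟙 (h.obj 𝒞) := by
    apply (adj.homEquiv 𝒞 (h.obj 𝒞)).injective
    rw [Adjunction.homEquiv_naturality_right, hr]
    erw [Equiv.apply_symm_apply, hfac]
    rw [Adjunction.homEquiv_unit, CategoryTheory.Functor.map_id]
    exact hp.trans (Category.comp_id (adj.unit.app 𝒞)).symm
  have hobj : ∀ X : ↑(h.obj 𝒞), nv p (((r.toFunctor : ↑(h.obj 𝒞) ⥤ DObj p).obj X).pt) = X :=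
    fun X => Functor.congr_obj (congrArg Cat.Hom.toFunctor hretr) X
  have hhom : ∀ {X Y : ↑(h.obj 𝒞)} (φ : X ⟶ Y),
      ((r.toFunctor : ↑(h.obj 𝒞) ⥤ DObj p).map φ).1 = eqToHom (hobj X) ≫ φ ≫ eqToHom (hobj Y).symm :=
    fun {X Y} φ => Functor.congr_hom (congrArg Cat.Hom.toFunctor hretr) φ
  let F : K ⟶ 𝒞 := extHom hK (f0 p g r.toFunctor) (f1 p g r.toFunctor hobj hhom)
    (f1_sigma p g r.toFunctor hobj hhom) (f1_delta p g r.toFunctor hobj hhom)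
  refine ⟨F, ?_⟩
  apply (adj.homEquiv K (h.obj 𝒞)).injective
  rw [Adjunction.homEquiv_unit]
  have hu : adj.unit.app K ≫ nerveFunctor.map (h.map F) = F ≫ p := by
    rw [hp]
    exact (adj.unit.naturality F).symm
  rw [hu, ← hg]
  apply hom_ext_01
  · intro v
    show p.app (op ⦋0⦌) (f0 p g r.toFunctor v) = g.app (op ⦋0⦌) v
    apply ComposableArrows.ext₀
    exact hobj (nv g v)
  · intro e
    show p.app (op ⦋1⦌) (f1 p g r.toFunctor hobj hhom e) = g.app (op ⦋1⦌) e
    rw [(f1_spec p g r.toFunctor hobj hhom e).2.2.1]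
    simp only [chi, zeta]
    erw [mk₁_conj, mk₁_conj, ← app_one g e]
end

section
/- Let 𝒞 be the free category on the quiver with four vertices A, B, C, D and three arrows u : A → B, v : C → B, w : C → D, and let W be the class of weak equivalences consisting of all identities together with the arrow v. Then the localization 𝒞[W⁻¹] is equivalent to the poset category [2] = {0 < 1 < 2}, via a functor sending A to 0, B and C to 1, and D to 2, and sending u and w to the generating arrows 0 → 1 and 1 → 2. -/
open CategoryTheory

namespace FreeZigzag

/-- The four vertices `A, B, C, D`. -/
inductive V : Type
  | A | B | C | D

/-- The three arrows `u : A ⟶ B`, `v : C ⟶ B` and `w : C ⟶ D`. -/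
inductive E : V → V → Type
  | u : E .A .B
  | v : E .C .B
  | w : E .C .D

instance : Quiver V := ⟨E⟩

/-- The weak equivalences: all identities together with the arrow `v`. -/
inductive Wrel : ∀ {X Y : Paths V}, (X ⟶ Y) → Prop
  | id (X : Paths V) : Wrel (𝟙 X)
  | v : Wrel (Quiver.Hom.toPath E.v)

/-- The weak equivalences, as a morphism property of the free category on the quiver. -/
def W : MorphismProperty (Paths V) := fun _ _ f => Wrel f

/-- The prefunctor to `[2] = {0 < 1 < 2}` sending `A ↦ 0`, `B, C ↦ 1`, `D ↦ 2`,
`u` and `w` to the generating arrows and `v` to the identity. -/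
def φq : Prefunctor V (Fin 3) where
  obj x := match x with
    | .A => 0
    | .B => 1
    | .C => 1
    | .D => 2
  map e := match e with
    | .u => homOfLE (by decide)
    | .v => homOfLE (by decide)
    | .w => homOfLE (by decide)

/-- The induced functor on the free category. -/
def φ : Paths V ⥤ Fin 3 := Paths.lift φq

lemma inverts : W.IsInvertedBy φ := by
  intro X Y f hf
  cases hf with
  | id X =>
      have h : φ.map (𝟙 X) = 𝟙 _ := φ.map_id X
      rw [h]; infer_instance
  | v =>
      have : φ.map (Quiver.Hom.toPath E.v) = 𝟙 (1 : Fin 3) := Subsingleton.elim _ _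
      rw [this]; exact IsIso.id _

instance : IsIso (W.Q.map (Quiver.Hom.toPath E.v)) := W.Q_inverts _ Wrel.v

noncomputable def ψ : Fin 3 ⥤ W.Localization :=
  ComposableArrows.mk₂ (W.Q.map (Quiver.Hom.toPath E.u))
    (inv (W.Q.map (Quiver.Hom.toPath E.v)) ≫ W.Q.map (Quiver.Hom.toPath E.w))

noncomputable def comp : ∀ X : Paths V, (φ ⋙ ψ).obj X ≅ W.Q.obj X
  | .A => Iso.refl _
  | .B => Iso.refl _
  | .C => (asIso (W.Q.map (Quiver.Hom.toPath E.v))).symm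
  | .D => Iso.refl _

lemma nat_single : ∀ {X Y : V} (e : E X Y),
    (φ ⋙ ψ).map (Quiver.Hom.toPath e) ≫ (comp Y).hom
      = (comp X).hom ≫ W.Q.map (Quiver.Hom.toPath e) := by
  intro X Y e
  cases e with
  | u =>
      dsimp [comp]
      erw [Category.comp_id]
  | v =>
      dsimp [comp]
      erw [Category.comp_id, IsIso.inv_hom_id]
      have h : φ.map (Quiver.Hom.toPath E.v) = 𝟙 (1 : Fin 3) := Subsingleton.elim _ _
      erw [Functor.comp_map, h]; exact ψ.map_id _
  | w =>
      dsimp [comp]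
      erw [Category.comp_id]
      have h : φ.map (Quiver.Hom.toPath E.w) = homOfLE (by decide : (1:Fin 3) ≤ 2) :=
        Subsingleton.elim _ _
      erw [Functor.comp_map, h]
      rfl

noncomputable def compIso : φ ⋙ ψ ≅ W.Q := by
  refine NatIso.ofComponents comp ?_
  intro X Y f
  exact Paths.induction
    (P := fun {a b} f => (φ ⋙ ψ).map f ≫ (comp b).hom = (comp a).hom ≫ W.Q.map f)
    (by intro v; simp)
    (fun p q ih => by
      simp only [Paths.of_map]
      erw [Functor.map_comp, Functor.map_comp, Category.assoc, nat_single,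
        ← Category.assoc, ih, Category.assoc]; rfl)
    f

noncomputable abbrev lft := Localization.Construction.lift φ inverts

noncomputable instance : Localization.Lifting W.Q W W.Q (lft ⋙ ψ) :=
  ⟨eqToIso (by rw [← Functor.assoc, Localization.Construction.fac]) ≪≫ compIso⟩

noncomputable def unitIso : 𝟭 W.Localization ≅ lft ⋙ ψ :=
  Localization.liftNatIso W.Q W W.Q W.Q (𝟭 _) (lft ⋙ ψ) (Iso.refl _)

noncomputable def counitIso : ψ ⋙ lft ≅ 𝟭 (Fin 3) :=
  NatIso.ofComponents
    (fun i => eqToIso (by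
      fin_cases i
      · exact Functor.congr_obj (Localization.Construction.fac φ inverts) V.A
      · exact Functor.congr_obj (Localization.Construction.fac φ inverts) V.B
      · exact Functor.congr_obj (Localization.Construction.fac φ inverts) V.D))
    (fun _ => Subsingleton.elim _ _)

instance φ_isLocalization : φ.IsLocalization W where
  inverts := inverts
  isEquivalence := (CategoryTheory.Equivalence.mk lft ψ unitIso counitIso).isEquivalence_functor

/-- Let `𝒞` be the free category on the quiver with vertices
`A, B, C, D` and arrows `u : A ⟶ B`, `v : C ⟶ B`, `w : C ⟶ D`, with weak equivalences
`W` the identities together with `v`. Then any localization of `𝒞` at `W` is equivalent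
to the poset `[2] = {0 < 1 < 2}`, via an equivalence under which the localization functor
becomes the functor sending `A ↦ 0`, `B, C ↦ 1`, `D ↦ 2`, and `u`, `w` to the generating
arrows `0 ⟶ 1` and `1 ⟶ 2`. -/
theorem localization_equiv_fin3
    {D : Type*} [Category D] (L : Paths V ⥤ D) [L.IsLocalization W] :
    ∃ G : D ⥤ Fin 3, G.IsEquivalence ∧ Nonempty (L ⋙ G ≅ φ) := by
  exact ⟨(Localization.uniq L φ W).functor, inferInstance,
    ⟨Localization.compUniqFunctor L φ W⟩⟩

end FreeZigzag
end

section
/- Let K be a 1-skeletal simplicial set, so that morphisms of hK are identified with paths of nondegenerate edges of K, and define the rank of a morphism of hK to be its path length and the rank of a simplex of N(hK) to be the rank of its long edge (its restriction along [1] → [r], 0 ↦ 0, 1 ↦ r; for a 0-simplex the rank is 0). Call an n-simplex τ of N(hK) primitive if for each 0 ≤ i < n the edge τ|Δ^{{i,i+1}} is the class of a single nondegenerate edge of K. Then every r-simplex σ of N(hK) of rank n admits a unique factorization σ = f*τ where τ is a primitive n-simplex of N(hK) and f : [r] → [n] is a monotone map. -/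
open CategoryTheory Simplicial Opposite

universe u

namespace SSetPaper

/-- For a 1-skeletal simplicial set `K`, the homotopy category `hK` is the path category
of the quiver of nondegenerate edges; morphisms are paths of nondegenerate edges. -/
abbrev HK (K : SSet.{u}) := Paths (EdgeQuiver K)

/-- The rank of a simplex of the nerve of `hK`: the path length of its long edge. -/
def rank (K : SSet.{u}) {r : ℕ} (σ : ComposableArrows (HK K) r) : ℕ :=
  Quiver.Path.length (σ.map' 0 r (by omega) (by omega))

/-- A simplex `τ` of the nerve of `hK` is primitive if each of its consecutive edges
`τ|Δ^{i,i+1}` is (the class of) a single nondegenerate edge of `K`, i.e. has rank 1. -/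
def Primitive (K : SSet.{u}) {n : ℕ} (τ : ComposableArrows (HK K) n) : Prop :=
  ∀ (i : ℕ) (hi : i < n),
    Quiver.Path.length (τ.map' i (i+1) (by omega) (by omega)) = 1

section PathTools

open Quiver

variable {V : Type u} [Quiver.{u} V]

/-- Split a path at position `k`. -/
def splitAt {a : V} : ∀ {b : V}, Path a b → ℕ → (Σ c : V, Path a c × Path c b) := fun p k =>
  match p, k with
  | .nil, _ => ⟨a, .nil, .nil⟩
  | .cons p e, k =>
    if k ≤ p.length then
      ⟨(splitAt p k).1, (splitAt p k).2.1, (splitAt p k).2.2.cons e⟩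
    else ⟨_, .cons p e, .nil⟩

theorem splitAt_comp {a c b : V} (q : Path a c) (s : Path c b) :
    splitAt (q.comp s) q.length = ⟨c, q, s⟩ := by
  induction s with
  | nil =>
    show splitAt q q.length = _
    cases q with
    | nil => rfl
    | cons p e =>
      show splitAt (Path.cons p e) (p.length + 1) = _
      rw [splitAt, if_neg (by omega)]
  | cons s' e ih =>
    show splitAt ((q.comp s').cons e) q.length = _
    rw [splitAt, if_pos (by rw [Path.length_comp]; omega), ih]

/-- The vertex at position `k` along a path. -/
def vtx {a b : V} (p : Path a b) (k : ℕ) : V := (splitAt p k).1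

/-- The prefix of length `k` of a path. -/
def pre {a b : V} (p : Path a b) (k : ℕ) : Path a (vtx p k) := (splitAt p k).2.1

theorem splitAt_eq {a c b : V} {k : ℕ} {p : Path a b} {q : Path a c} {s : Path c b}
    (h : p = q.comp s) (hk : q.length = k) : splitAt p k = ⟨c, q, s⟩ := by
  subst h hk; exact splitAt_comp q s

theorem vtx_eq {a c b : V} {k : ℕ} {p : Path a b} {q : Path a c} {s : Path c b}
    (h : p = q.comp s) (hk : q.length = k) : vtx p k = c :=
  congrArg Sigma.fst (splitAt_eq h hk)

theorem pre_heq {a c b : V} {k : ℕ} {p : Path a b} {q : Path a c} {s : Path c b}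
    (h : p = q.comp s) (hk : q.length = k) : HEq (pre p k) q := by
  show HEq (splitAt p k).2.1 q
  rw [splitAt_eq h hk]

theorem exists_split {a : V} : ∀ {b : V} (p : Path a b) (k : ℕ), k ≤ p.length →
    ∃ (c : V) (q : Path a c) (s : Path c b), q.length = k ∧ p = q.comp s := by
  intro b p
  induction p with
  | nil => intro k hk; exact ⟨a, .nil, .nil, by simp at hk ⊢; omega, rfl⟩
  | @cons c' b' p e ih =>
    intro k hk
    by_cases h : k ≤ p.length
    · obtain ⟨c, q, s, hl, hp⟩ := ih k h
      exact ⟨c, q, s.cons e, hl, by rw [hp]; rfl⟩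
    · refine ⟨b', p.cons e, .nil, ?_, rfl⟩
      simp at hk ⊢; omega

theorem exists_edge {a b : V} (p : Path a b) (k : ℕ) (hk : k < p.length) :
    ∃ e : Path (vtx p k) (vtx p (k + 1)), e.length = 1 ∧ pre p (k + 1) = (pre p k).comp e := by
  obtain ⟨c, q, s, hl, hp⟩ := exists_split p k hk.le
  have hs : s.length = p.length - k := by
    subst hp; rw [Path.length_comp] at *; omega
  obtain ⟨m, hm⟩ : ∃ m, s.length = m + 1 := ⟨s.length - 1, by omega⟩
  obtain ⟨d, f, s', hs', rfl⟩ := Path.eq_toPath_comp_of_length_eq_succ s hm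
  have hp' : p = (q.comp f.toPath).comp s' := by rw [hp, Path.comp_assoc]
  have hq' : (q.comp f.toPath).length = k + 1 := by simp [hl, Hom.toPath]
  have hc : vtx p k = c := vtx_eq hp hl
  have hd : vtx p (k + 1) = d := vtx_eq hp' hq'
  have h1 := pre_heq hp hl
  have h2 := pre_heq hp' hq'
  subst hc hd
  rw [eq_of_heq h1, eq_of_heq h2]
  exact ⟨f.toPath, rfl, rfl⟩

/-- The `k`-th edge of a path. -/
noncomputable def edge {a b : V} (p : Path a b) (k : ℕ) (hk : k < p.length) :
    Path (vtx p k) (vtx p (k + 1)) := (exists_edge p k hk).choose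

theorem edge_length {a b : V} (p : Path a b) (k : ℕ) (hk : k < p.length) :
    (edge p k hk).length = 1 := (exists_edge p k hk).choose_spec.1

theorem pre_edge {a b : V} (p : Path a b) (k : ℕ) (hk : k < p.length) :
    pre p (k + 1) = (pre p k).comp (edge p k hk) := (exists_edge p k hk).choose_spec.2

/-- A path as a morphism in the path category. -/
def toPathsHom {x y : V} (q : Path x y) :
    @Quiver.Hom (Paths V) (Paths.categoryPaths V).toQuiver ((Paths.of V).obj x) ((Paths.of V).obj y) := q

theorem toPathsHom_comp {x y z : V} (q : Path x y) (q' : Path y z) :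
    toPathsHom q ≫ toPathsHom q' = toPathsHom (q.comp q') := rfl

/-- The primitive simplex associated to a path. -/
noncomputable def primOfPath {a b : V} {n : ℕ} (p : Path a b) (hn : p.length = n) :
    ComposableArrows (Paths V) n :=
  ComposableArrows.mkOfObjOfMapSucc (fun i => (Paths.of V).obj (vtx p i))
    (fun i => toPathsHom (edge p i (by omega)))

theorem primOfPath_obj {a b : V} {n : ℕ} (p : Path a b) (hn : p.length = n) (i : Fin (n+1)) :
    (primOfPath p hn).obj i = (Paths.of V).obj (vtx p i) := rfl

theorem primOfPath_map_succ {a b : V} {n : ℕ} (p : Path a b) (hn : p.length = n)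
    (k : ℕ) (hk : k < n) :
    (primOfPath p hn).map' k (k+1) (by omega) (by omega) = toPathsHom (edge p k (by omega)) :=
  ComposableArrows.mkOfObjOfMapSucc_map_succ _ _ k hk

theorem pre_map' {a b : V} {n : ℕ} (p : Path a b) (hn : p.length = n)
    (j : ℕ) (hj : j ≤ n) : ∀ (k : ℕ) (hjk : j ≤ k) (hk : k ≤ n),
    toPathsHom (pre p j) ≫ (primOfPath p hn).map' j k hjk hk = toPathsHom (pre p k) := by
  refine Nat.le_induction ?_ ?_
  · intro hk
    rw [ComposableArrows.map'_self (primOfPath p hn) j hj]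
    exact Category.comp_id _
  · intro k hjk ih hk
    rw [ComposableArrows.map'_comp (primOfPath p hn) j k (k+1) hjk (by omega) hk]
    refine (Category.assoc _ _ _).symm.trans ?_
    refine (congrArg (fun z => z ≫ (primOfPath p hn).map' k (k+1) (by omega) hk) (ih (by omega))).trans ?_
    rw [pre_edge p k (by omega)]
    exact congrArg (fun z => toPathsHom (pre p k) ≫ z) (primOfPath_map_succ p hn k (by omega))

theorem length_map'_of_prim {n : ℕ} (τ : ComposableArrows (Paths V) n)
    (hτ : ∀ (i : ℕ) (hi : i < n),
      Quiver.Path.length (τ.map' i (i+1) (by omega) (by omega)) = 1)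
    (j : ℕ) (hj : j ≤ n) : ∀ (k : ℕ) (hjk : j ≤ k) (hk : k ≤ n),
    Quiver.Path.length (τ.map' j k hjk hk) = k - j := by
  refine Nat.le_induction ?_ ?_
  · intro hk
    rw [ComposableArrows.map'_self τ j hj]
    simp
    rfl
  · intro k hjk ih hk
    rw [ComposableArrows.map'_comp τ j k (k+1) hjk (by omega) hk]
    have : Quiver.Path.length ((τ.map' j k hjk (by omega)).comp
        (τ.map' k (k+1) (by omega) hk)) = (k - j) + 1 := by
      have hl := Quiver.Path.length_comp (τ.map' j k hjk (by omega)) (τ.map' k (k+1) (by omega) hk)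
      rw [ih (by omega), hτ k (by omega)] at hl
      exact hl
    rw [show (τ.map' j k hjk (by omega)) ≫ (τ.map' k (k+1) (by omega) hk)
      = (τ.map' j k hjk (by omega)).comp (τ.map' k (k+1) (by omega) hk) from rfl, this]
    omega

theorem eqToHom_length {X Y : Paths V} (h : X = Y) :
    Quiver.Path.length (eqToHom h : X ⟶ Y) = 0 := by
  subst h; rfl

theorem eq_comp_eqToHom {C : Type*} [Category C] {a X Y : C} (h : X = Y) (f : a ⟶ X)
    (g : a ⟶ Y) (hfg : HEq f g) : g = f ≫ eqToHom h := by
  subst h; simpa using (eq_of_heq hfg).symm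

theorem map_eq {C : Type*} [Category C] {n : ℕ} (τ : ComposableArrows C n) {X Y : Fin (n+1)}
    (g : X ⟶ Y) (j k : ℕ) (hjk : j ≤ k) (hk : k ≤ n)
    (hX : X = ⟨j, by omega⟩) (hY : Y = ⟨k, by omega⟩) :
    τ.map g = eqToHom (by rw [hX]) ≫ τ.map' j k hjk hk ≫ eqToHom (by rw [hY]) := by
  subst hX hY
  simp only [eqToHom_refl, Category.comp_id, Category.id_comp]
  exact congrArg τ.map (Subsingleton.elim g _)

theorem cancel_left {X Y Z : Paths V} (f : X ⟶ Y) {g₁ g₂ : Y ⟶ Z}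
    (h : f ≫ g₁ = f ≫ g₂) : g₁ = g₂ :=
  Quiver.Path.comp_injective_right f h


theorem id_heq_eqToHom {C : Type*} [Category C] {X Y : C} (h : X = Y) :
    HEq (𝟙 X) (eqToHom h) := by subst h; simp

theorem length_hom_comp {X Y Z : Paths V} (f : X ⟶ Y) (g : Y ⟶ Z) :
    Quiver.Path.length (f ≫ g) = Quiver.Path.length f + Quiver.Path.length g :=
  Quiver.Path.length_comp f g

theorem length_conj {X Y X' Y' : Paths V} (e : X' = X) (e' : Y = Y') (g : X ⟶ Y) :
    Quiver.Path.length (eqToHom e ≫ g ≫ eqToHom e') = Quiver.Path.length g := by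
  subst e e'; simp

theorem eq_conj_self {C : Type*} [Category C] {X Y Z : C} (h : X = Y) (g : X ⟶ Z) :
    g = eqToHom h ≫ eqToHom h.symm ≫ g := by subst h; simp

theorem conj_conj {C : Type*} [Category C] {a1 a2 a3 b3 b2 b1 : C}
    (eA : a1 = a2) (eC : a2 = a3) (g : a3 ⟶ b3) (eD : b3 = b2) (eB : b2 = b1)
    (e1 : a1 = a3) (e2 : b3 = b1) :
    eqToHom eA ≫ (eqToHom eC ≫ g ≫ eqToHom eD) ≫ eqToHom eB =
      eqToHom e1 ≫ g ≫ eqToHom e2 := by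
  subst eA eC eD eB; simp

theorem assoc4 {C : Type*} [Category C] {a b c d e : C}
    (f1 : a ⟶ b) (f2 : b ⟶ c) (f3 : c ⟶ d) (f4 : d ⟶ e) :
    f1 ≫ (f2 ≫ f3) ≫ f4 = (f1 ≫ f2) ≫ (f3 ≫ f4) := by simp

theorem ext_paths {m : ℕ} {F G : ComposableArrows (Paths V) m}
    (hobj : ∀ i : Fin (m+1), F.obj i = G.obj i)
    (hmap : ∀ (i : ℕ) (hi : i ≤ m), HEq (F.map' 0 i (by omega) hi) (G.map' 0 i (by omega) hi)) :
    F = G := by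
  refine ComposableArrows.ext (fun i => hobj i) ?_
  intro i hi
  apply cancel_left (F.map' 0 i (by omega) (by omega))
  rw [← ComposableArrows.map'_comp F 0 i (i+1) (by omega) (by omega) (by omega)]
  have h1 : F.map' 0 i (by omega) (by omega) = eqToHom (hobj ⟨0, by omega⟩) ≫
      G.map' 0 i (by omega) (by omega) ≫ eqToHom (hobj ⟨i, by omega⟩).symm := by
    refine eq_of_heq ?_
    simp only [heq_eqToHom_comp_iff, heq_comp_eqToHom_iff]
    exact hmap i (by omega)
  have h2 : F.map' 0 (i+1) (by omega) (by omega) = eqToHom (hobj ⟨0, by omega⟩) ≫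
      G.map' 0 (i+1) (by omega) (by omega) ≫ eqToHom (hobj ⟨i+1, by omega⟩).symm := by
    refine eq_of_heq ?_
    simp only [heq_eqToHom_comp_iff, heq_comp_eqToHom_iff]
    exact hmap (i+1) (by omega)
  rw [h2, h1, ComposableArrows.map'_comp G 0 i (i+1) (by omega) (by omega) (by omega)]
  simp

set_option maxHeartbeats 4000000 in
/-- General form of the main theorem, for the path category of an arbitrary quiver. -/
theorem main {r n : ℕ} (σ : ComposableArrows (Paths V) r)
    (hrank : Quiver.Path.length (σ.map' 0 r (by omega) (by omega)) = n) :
    ∃ (τ : ComposableArrows (Paths V) n) (f : (⦋r⦌ : SimplexCategory) ⟶ ⦋n⦌),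
      (∀ (i : ℕ) (hi : i < n),
        Quiver.Path.length (τ.map' i (i+1) (by omega) (by omega)) = 1) ∧
      σ = (nerve (Paths V)).map f.op τ ∧
      ∀ (τ' : ComposableArrows (Paths V) n) (f' : (⦋r⦌ : SimplexCategory) ⟶ ⦋n⦌),
        (∀ (i : ℕ) (hi : i < n),
          Quiver.Path.length (τ'.map' i (i+1) (by omega) (by omega)) = 1) →
        σ = (nerve (Paths V)).map f'.op τ' → τ' = τ ∧ f' = f := by
  classical
  let a : V := σ.obj ⟨0, by omega⟩
  let b : V := σ.obj ⟨r, by omega⟩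
  let p : Quiver.Path a b := σ.map' 0 r (by omega) (le_refl r)
  have hn : p.length = n := hrank
  -- the splitting data of σ
  have key : ∀ (i : ℕ) (hi : i ≤ r),
      vtx p (Quiver.Path.length (σ.map' 0 i (by omega) hi)) = (Paths.of V).obj (σ.obj ⟨i, by omega⟩) ∧
      HEq (pre p (Quiver.Path.length (σ.map' 0 i (by omega) hi))) (σ.map' 0 i (by omega) hi) := by
    intro i hi
    have h : p = Quiver.Path.comp (σ.map' 0 i (by omega) hi) (σ.map' i r hi (le_refl r)) :=
      σ.map'_comp 0 i r (by omega) hi (le_refl r)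
    exact ⟨vtx_eq h rfl, pre_heq h rfl⟩
  have hle : ∀ (i : ℕ) (hi : i ≤ r), Quiver.Path.length (σ.map' 0 i (by omega) hi) ≤ n := by
    intro i hi
    have h : p = Quiver.Path.comp (σ.map' 0 i (by omega) hi) (σ.map' i r hi (le_refl r)) :=
      σ.map'_comp 0 i r (by omega) hi (le_refl r)
    have h2 := congrArg Quiver.Path.length h
    rw [show Quiver.Path.length (Quiver.Path.comp (σ.map' 0 i (by omega) hi) (σ.map' i r hi (le_refl r))) = _ from length_hom_comp _ _] at h2
    omega
  have hmono : ∀ (i j : ℕ) (hij : i ≤ j) (hj : j ≤ r),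
      Quiver.Path.length (σ.map' 0 i (by omega) (by omega)) ≤
        Quiver.Path.length (σ.map' 0 j (by omega) hj) := by
    intro i j hij hj
    have h : σ.map' 0 j (by omega) hj =
        Quiver.Path.comp (σ.map' 0 i (by omega) (by omega)) (σ.map' i j hij hj) :=
      σ.map'_comp 0 i j (by omega) hij hj
    have h2 := congrArg Quiver.Path.length h
    rw [show Quiver.Path.length (Quiver.Path.comp (σ.map' 0 i (by omega) (by omega)) (σ.map' i j hij hj)) = _ from length_hom_comp _ _] at h2
    omega
  have h0 : Quiver.Path.length (σ.map' 0 0 (by omega) (by omega)) = 0 := by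
    rw [ComposableArrows.map'_self σ 0 (by omega)]; rfl
  -- canonical form of the maps of the primitive simplex
  have hsplit0 : vtx p 0 = (Paths.of V).obj a ∧
      HEq (pre p 0) (Quiver.Path.nil : Quiver.Path a a) := by
    have hcomp : p = Quiver.Path.comp (Quiver.Path.nil : Quiver.Path a a) p :=
      (Quiver.Path.nil_comp p).symm
    exact ⟨vtx_eq hcomp rfl, pre_heq hcomp rfl⟩
  have hsplit0' : ((Paths.of V).obj (vtx p 0) : Paths V) = (Paths.of V).obj a := hsplit0.1
  have hpre0 : toPathsHom (pre p 0) = eqToHom hsplit0'.symm :=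
    eq_of_heq (hsplit0.2.trans (id_heq_eqToHom hsplit0'.symm))
  have htau : ∀ (k : ℕ) (hk : k ≤ n), (primOfPath p hn).map' 0 k (by omega) hk =
      eqToHom hsplit0' ≫ toPathsHom (pre p k) := by
    intro k hk
    have hpm := pre_map' p hn 0 (by omega) k (by omega) hk
    have h1 : eqToHom hsplit0'.symm ≫ (primOfPath p hn).map' 0 k (by omega) hk =
        toPathsHom (pre p k) :=
      (congrArg (fun z => z ≫ (primOfPath p hn).map' 0 k (by omega) hk) hpre0).symm.trans hpm
    exact (eq_conj_self hsplit0' _).trans (congrArg (fun z => eqToHom hsplit0' ≫ z) h1)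
  -- the monotone map f
  obtain ⟨f, hf⟩ : ∃ f : (⦋r⦌ : SimplexCategory) ⟶ ⦋n⦌, ∀ i : Fin (r+1),
      f.toOrderHom i = ⟨Quiver.Path.length (σ.map' 0 i.1 (by omega) (Nat.le_of_lt_succ i.2)),
        Nat.lt_succ_of_le (hle i.1 (Nat.le_of_lt_succ i.2))⟩ :=
    ⟨SimplexCategory.Hom.mk
      ⟨fun i => ⟨Quiver.Path.length (σ.map' 0 i.1 (by omega) (Nat.le_of_lt_succ i.2)),
        Nat.lt_succ_of_le (hle i.1 (Nat.le_of_lt_succ i.2))⟩,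
       fun i j hij => by
        simp only [Fin.mk_le_mk]
        exact hmono i.1 j.1 hij (Nat.le_of_lt_succ j.2)⟩, fun i => rfl⟩
  refine ⟨primOfPath p hn, f, ?_, ?_, ?_⟩
  · -- primitivity
    intro i hi
    rw [primOfPath_map_succ p hn i hi]
    exact edge_length p i (by omega)
  · -- σ = f* τ
    refine ext_paths ?_ ?_
    · intro i
      have h1 := ((key i.1 (Nat.le_of_lt_succ i.2)).1).symm
      have h2 := congrArg (primOfPath p hn).obj (hf i).symm
      exact h1.trans h2
    · intro i hi
      have hX : f.toOrderHom ⟨0, by omega⟩ = ⟨0, by omega⟩ :=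
        (hf ⟨0, by omega⟩).trans (Fin.ext h0)
      have hY : f.toOrderHom ⟨i, Nat.lt_succ_of_le hi⟩ =
          ⟨Quiver.Path.length (σ.map' 0 i (by omega) hi),
            Nat.lt_succ_of_le (hle i hi)⟩ := hf ⟨i, Nat.lt_succ_of_le hi⟩
      have e3 : ((nerve (Paths V)).map f.op (primOfPath p hn)).map' 0 i (by omega) hi =
          eqToHom (congrArg (primOfPath p hn).obj hX) ≫
            (primOfPath p hn).map' 0 (Quiver.Path.length (σ.map' 0 i (by omega) hi))
              (by omega) (hle i hi) ≫
            eqToHom (congrArg (primOfPath p hn).obj hY).symm :=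
        map_eq (primOfPath p hn) _ 0 _ (by omega) (hle i hi) hX hY
      have t1 : HEq (((nerve (Paths V)).map f.op (primOfPath p hn)).map' 0 i (by omega) hi)
          ((primOfPath p hn).map' 0 (Quiver.Path.length (σ.map' 0 i (by omega) hi))
            (by omega) (hle i hi)) :=
        (heq_of_eq e3).trans ((eqToHom_comp_heq _ _).trans (comp_eqToHom_heq _ _))
      have t2 : HEq ((primOfPath p hn).map' 0 (Quiver.Path.length (σ.map' 0 i (by omega) hi))
            (by omega) (hle i hi))
          (toPathsHom (pre p (Quiver.Path.length (σ.map' 0 i (by omega) hi)))) :=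
        (heq_of_eq (htau _ (hle i hi))).trans (eqToHom_comp_heq _ _)
      exact (key i hi).2.symm.trans (t2.symm.trans t1.symm)
  · -- uniqueness
    intro τ' f' hprim' hσ'
    have hcg : ∀ (i j : ℕ) (hij : i ≤ j) (hj : j ≤ r),
        σ.map' i j hij hj = eqToHom (Functor.congr_obj hσ' ⟨i, Nat.lt_succ_of_le (hij.trans hj)⟩) ≫
          ((nerve (Paths V)).map f'.op τ').map' i j hij hj ≫
          eqToHom (Functor.congr_obj hσ' ⟨j, Nat.lt_succ_of_le hj⟩).symm := by
      intro i j hij hj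
      exact Functor.congr_hom hσ' _
    have hmono' : ∀ (i j : ℕ) (hij : i ≤ j) (hj : j ≤ r),
        (f'.toOrderHom ⟨i, Nat.lt_succ_of_le (hij.trans hj)⟩ : ℕ) ≤
          (f'.toOrderHom ⟨j, Nat.lt_succ_of_le hj⟩ : ℕ) :=
      fun i j hij hj => f'.toOrderHom.monotone (Fin.mk_le_mk.mpr hij)
    have hbd : ∀ (j : ℕ) (hj : j ≤ r), (f'.toOrderHom ⟨j, Nat.lt_succ_of_le hj⟩ : ℕ) ≤ n :=
      fun j hj => Nat.le_of_lt_succ (f'.toOrderHom ⟨j, Nat.lt_succ_of_le hj⟩).2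
    have e4 : ∀ (i j : ℕ) (hij : i ≤ j) (hj : j ≤ r),
        ((nerve (Paths V)).map f'.op τ').map' i j hij hj =
          eqToHom rfl ≫ τ'.map' (f'.toOrderHom ⟨i, Nat.lt_succ_of_le (hij.trans hj)⟩ : ℕ)
            (f'.toOrderHom ⟨j, Nat.lt_succ_of_le hj⟩ : ℕ)
            (hmono' i j hij hj) (hbd j hj) ≫ eqToHom rfl := fun i j hij hj =>
      map_eq τ' _ _ _ (hmono' i j hij hj) (hbd j hj) rfl rfl
    have hL : ∀ (i j : ℕ) (hij : i ≤ j) (hj : j ≤ r),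
        Quiver.Path.length (σ.map' i j hij hj) +
            (f'.toOrderHom ⟨i, Nat.lt_succ_of_le (hij.trans hj)⟩ : ℕ)
          = (f'.toOrderHom ⟨j, Nat.lt_succ_of_le hj⟩ : ℕ) := by
      intro i j hij hj
      have q1 : Quiver.Path.length (σ.map' i j hij hj) =
          Quiver.Path.length (((nerve (Paths V)).map f'.op τ').map' i j hij hj) :=
        (congrArg Quiver.Path.length (hcg i j hij hj)).trans (length_conj _ _ _)
      have q2 : Quiver.Path.length (((nerve (Paths V)).map f'.op τ').map' i j hij hj) =
          Quiver.Path.length (τ'.map' (f'.toOrderHom ⟨i, Nat.lt_succ_of_le (hij.trans hj)⟩ : ℕ)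
            (f'.toOrderHom ⟨j, Nat.lt_succ_of_le hj⟩ : ℕ)
            (hmono' i j hij hj) (hbd j hj)) :=
        (congrArg Quiver.Path.length (e4 i j hij hj)).trans (length_conj _ _ _)
      have q3 := length_map'_of_prim τ' hprim' _ (hbd i (hij.trans hj)) _
        (hmono' i j hij hj) (hbd j hj)
      have := hmono' i j hij hj
      omega
    have h0r : (f'.toOrderHom ⟨0, Nat.lt_succ_of_le (Nat.zero_le r)⟩ : ℕ) = 0 ∧
        (f'.toOrderHom ⟨r, Nat.lt_succ_of_le (le_refl r)⟩ : ℕ) = n := by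
      have h3 := hL 0 r (Nat.zero_le r) (le_refl r)
      have h2 := hbd r (le_refl r)
      have hpn : Quiver.Path.length (σ.map' 0 r (Nat.zero_le r) (le_refl r)) = n := hn
      omega
    have hX' : (SimplexCategory.toCat.map f'.op.unop).toFunctor.obj ⟨0, Nat.succ_pos r⟩ =
        (⟨0, Nat.succ_pos n⟩ : Fin (n+1)) := Fin.ext h0r.1
    have hY' : (SimplexCategory.toCat.map f'.op.unop).toFunctor.obj ⟨r, Nat.lt_succ_of_le (le_refl r)⟩ =
        (⟨n, Nat.lt_succ_of_le (le_refl n)⟩ : Fin (n+1)) := Fin.ext h0r.2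
    have e1 : (Paths.of V).obj a = τ'.obj ⟨0, Nat.succ_pos n⟩ :=
      (Functor.congr_obj hσ' ⟨0, Nat.succ_pos r⟩).trans (congrArg τ'.obj hX')
    have e2 : τ'.obj ⟨n, Nat.lt_succ_of_le (le_refl n)⟩ = (Paths.of V).obj b :=
      ((Functor.congr_obj hσ' ⟨r, Nat.lt_succ_of_le (le_refl r)⟩).trans
        (congrArg τ'.obj hY')).symm
    have hp' : p = eqToHom e1 ≫ τ'.map' 0 n (by omega) (le_refl n) ≫ eqToHom e2 := by
      have e5 : ((nerve (Paths V)).map f'.op τ').map' 0 r (by omega) (le_refl r) =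
          eqToHom (congrArg τ'.obj hX') ≫ τ'.map' 0 n (by omega) (le_refl n) ≫
            eqToHom (congrArg τ'.obj hY').symm :=
        map_eq τ' _ 0 n (by omega) (le_refl n) hX' hY'
      show σ.map' 0 r (by omega) (le_refl r) = _
      refine (hcg 0 r (by omega) (le_refl r)).trans ?_
      refine (congrArg (fun z => eqToHom (Functor.congr_obj hσ' ⟨0, Nat.succ_pos r⟩) ≫ z ≫
          eqToHom (Functor.congr_obj hσ' ⟨r, Nat.lt_succ_of_le (le_refl r)⟩).symm) e5).trans ?_
      exact conj_conj _ _ _ _ _ e1 e2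
    have hsplitk : ∀ (k : ℕ) (hk : k ≤ n),
        vtx p k = τ'.obj ⟨k, Nat.lt_succ_of_le hk⟩ ∧
        HEq (pre p k) (eqToHom e1 ≫ τ'.map' 0 k (by omega) hk) := by
      intro k hk
      have hcompk : p = Quiver.Path.comp (eqToHom e1 ≫ τ'.map' 0 k (by omega) hk)
          (τ'.map' k n hk (le_refl n) ≫ eqToHom e2) := by
        refine (hp'.trans (congrArg (fun z => eqToHom e1 ≫ z ≫ eqToHom e2)
          (ComposableArrows.map'_comp τ' 0 k n (by omega) hk (le_refl n)))).trans ?_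
        exact assoc4 _ _ _ _
      have hlen1 : Quiver.Path.length (eqToHom e1 ≫ τ'.map' 0 k (by omega) hk) = k := by
        have l1 := length_hom_comp (eqToHom e1) (τ'.map' 0 k (by omega) hk)
        have l2 := length_map'_of_prim τ' hprim' 0 (by omega) k (by omega) hk
        have l3 := eqToHom_length e1
        omega
      exact ⟨vtx_eq hcompk hlen1, pre_heq hcompk hlen1⟩
    constructor
    · -- τ' = τ
      refine ext_paths ?_ ?_
      · intro i
        exact ((hsplitk i.1 (Nat.le_of_lt_succ i.2)).1).symm
      · intro k hk
        have s1 : HEq (τ'.map' 0 k (by omega) hk)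
            (eqToHom e1 ≫ τ'.map' 0 k (by omega) hk) := (eqToHom_comp_heq _ _).symm
        have s3 : HEq (toPathsHom (pre p k)) ((primOfPath p hn).map' 0 k (by omega) hk) :=
          ((heq_of_eq (htau k hk)).trans (eqToHom_comp_heq _ _)).symm
        exact s1.trans ((hsplitk k hk).2.symm.trans s3)
    · -- f' = f
      refine SimplexCategory.Hom.ext _ _ (OrderHom.ext _ _ (funext fun i => ?_))
      refine Eq.trans (Fin.ext ?_) (hf i).symm
      show (f'.toOrderHom i : ℕ) =
        Quiver.Path.length (σ.map' 0 i.1 (Nat.zero_le _) (Nat.le_of_lt_succ i.2))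
      have h6 : Quiver.Path.length (σ.map' 0 i.1 (Nat.zero_le _) (Nat.le_of_lt_succ i.2)) +
          (f'.toOrderHom ⟨0, Nat.lt_succ_of_le (Nat.zero_le r)⟩ : ℕ) = (f'.toOrderHom i : ℕ) :=
        hL 0 i.1 (Nat.zero_le _) (Nat.le_of_lt_succ i.2)
      omega

end PathTools

/-- Let `K` be a 1-skeletal simplicial set, so that `hK` is the path
category of the quiver of nondegenerate edges of `K`. Then every `r`-simplex `σ` of
`N(hK)` of rank `n` admits a unique factorization `σ = f^* τ` with `τ` a primitive
`n`-simplex of `N(hK)` and `f : [r] ⟶ [n]` a monotone map. -/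
theorem exists_unique_primitive_factorization
    (K : SSet.{u}) (hK : K.OneSkeletal) {r n : ℕ}
    (σ : ComposableArrows (HK K) r) (hrank : rank K σ = n) :
    ∃ (τ : ComposableArrows (HK K) n) (f : (⦋r⦌ : SimplexCategory) ⟶ ⦋n⦌),
      Primitive K τ ∧ σ = (nerve (HK K)).map f.op τ ∧
      ∀ (τ' : ComposableArrows (HK K) n) (f' : (⦋r⦌ : SimplexCategory) ⟶ ⦋n⦌),
        Primitive K τ' → σ = (nerve (HK K)).map f'.op τ' → τ' = τ ∧ f' = f :=
  main (V := EdgeQuiver K) (r := r) (n := n) σ hrank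

end SSetPaper
end
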